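/- arXiv:1504.07583 — 10 statements merged into one kernel-verified Lean document; each statement's English description precedes it below -/
import Mathlib

section
/- Let H be a real inner product space, and let s₀, s, X* ∈ H satisfy ‖s₀‖ = ‖s‖ and ⟨X*, s₀ − s⟩ ≥ 0. Then for every t ∈ [0,1], the point X_t = s₀ + t·(X* − s₀) satisfies ‖X_t − s‖² − ‖X_t − s₀‖² ≥ 2(1 − t)·(‖s₀‖² − ⟨s₀, s⟩) ≥ 0; in particular ‖X_t − s₀‖ ≤ ‖X_t − s‖. -/
open scoped InnerProductSpace

/-- Along the segment from `s₀` towards `X*`, every point is at least as close to `s₀`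
as to any other point `s` of the same norm with `⟪X*, s₀ - s⟫ ≥ 0`. -/
theorem stmt0 {H : Type*} [NormedAddCommGroup H] [InnerProductSpace ℝ H]
    (s₀ s Xstar : H) (hnorm : ‖s₀‖ = ‖s‖) (hip : 0 ≤ ⟪Xstar, s₀ - s⟫_ℝ) :
    ∀ t : ℝ, t ∈ Set.Icc (0 : ℝ) 1 →
      ‖(s₀ + t • (Xstar - s₀)) - s‖ ^ 2 - ‖(s₀ + t • (Xstar - s₀)) - s₀‖ ^ 2
          ≥ 2 * (1 - t) * (‖s₀‖ ^ 2 - ⟪s₀, s⟫_ℝ)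
        ∧ 2 * (1 - t) * (‖s₀‖ ^ 2 - ⟪s₀, s⟫_ℝ) ≥ 0
        ∧ ‖(s₀ + t • (Xstar - s₀)) - s₀‖ ≤ ‖(s₀ + t • (Xstar - s₀)) - s‖ := by
  intro t ht
  obtain ⟨ht0, ht1⟩ := ht
  have hD : 0 ≤ ‖s₀‖ ^ 2 - ⟪s₀, s⟫_ℝ := by
    have := real_inner_le_norm s₀ s
    rw [hnorm] at this ⊢; nlinarith [this]
  have key : ‖(s₀ + t • (Xstar - s₀)) - s‖ ^ 2 - ‖(s₀ + t • (Xstar - s₀)) - s₀‖ ^ 2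
      = 2 * t * ⟪Xstar, s₀ - s⟫_ℝ + 2 * (1 - t) * (‖s₀‖ ^ 2 - ⟪s₀, s⟫_ℝ) := by
    simp only [@norm_sub_sq_real, inner_add_left, inner_add_right, inner_sub_left,
      inner_sub_right, real_inner_smul_left, real_inner_smul_right,
      real_inner_self_eq_norm_sq, real_inner_comm s₀ s, real_inner_comm Xstar s₀,
      real_inner_comm Xstar s]
    have hns : ⟪s, s⟫_ℝ = ‖s₀‖ ^ 2 := by
      rw [real_inner_self_eq_norm_sq, hnorm]
    ring_nf
    have hn2 : ‖s‖ ^ 2 = ‖s₀‖ ^ 2 := by rw [hnorm]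
    nlinarith [hns, hn2]
  have h1 : ‖(s₀ + t • (Xstar - s₀)) - s‖ ^ 2 - ‖(s₀ + t • (Xstar - s₀)) - s₀‖ ^ 2
      ≥ 2 * (1 - t) * (‖s₀‖ ^ 2 - ⟪s₀, s⟫_ℝ) := by
    rw [key]; nlinarith
  have h2 : 2 * (1 - t) * (‖s₀‖ ^ 2 - ⟪s₀, s⟫_ℝ) ≥ 0 := by nlinarith
  refine ⟨h1, h2, ?_⟩
  have hsq : ‖(s₀ + t • (Xstar - s₀)) - s₀‖ ^ 2 ≤ ‖(s₀ + t • (Xstar - s₀)) - s‖ ^ 2 := by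
    nlinarith
  exact (pow_le_pow_iff_left₀ (norm_nonneg _) (norm_nonneg _) two_ne_zero).mp hsq
end

section
/- Let σ₀ be a permutation of {1,…,N} and set s₀ = A∘σ₀ ∈ S. Let Y* ∈ H and let σ* be a permutation minimizing σ ↦ ‖Y*∘σ − s₀‖ over all permutations σ ∈ S_N; set X* = Y*∘σ*. Then for every t ∈ [0,1], the point X_t = s₀ + t·(X* − s₀) has s₀ as a nearest point in S: for every permutation σ ∈ S_N, ‖X_t − s₀‖ ≤ ‖X_t − A∘σ‖. -/
/-- The phase space `H = (ℝ^d)^N` with norm `‖X‖² = ∑ₐ |X(a)|²`. -/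
abbrev Hsp (N d : ℕ) := PiLp 2 (fun _ : Fin N => EuclideanSpace ℝ (Fin d))

/-- The inclusion of plain maps `{1,…,N} → ℝ^d` into `H`. -/
def toH {N d : ℕ} (X : Fin N → EuclideanSpace ℝ (Fin d)) : Hsp N d := WithLp.toLp 2 X

/-- Composition `X ∘ σ` of an element of `H` with a permutation. -/
def permComp {N d : ℕ} (X : Hsp N d) (σ : Equiv.Perm (Fin N)) : Hsp N d :=
  WithLp.toLp 2 (fun a => X (σ a))

lemma permComp_sub {N d : ℕ} (X Y : Hsp N d) (σ : Equiv.Perm (Fin N)) :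
    permComp (X - Y) σ = permComp X σ - permComp Y σ := by
  ext a; simp [permComp]

lemma permComp_mul {N d : ℕ} (X : Hsp N d) (σ τ : Equiv.Perm (Fin N)) :
    permComp (permComp X σ) τ = permComp X (σ * τ) := rfl

lemma norm_permComp {N d : ℕ} (X : Hsp N d) (τ : Equiv.Perm (Fin N)) :
    ‖permComp X τ‖ = ‖X‖ := by
  have h1 : ‖permComp X τ‖ ^ 2 = ‖X‖ ^ 2 := by
    rw [PiLp.norm_sq_eq_of_L2, PiLp.norm_sq_eq_of_L2]
    simp only [permComp]
    exact Equiv.sum_comp τ (fun a => ‖X a‖ ^ 2)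
  have := congrArg Real.sqrt h1
  rwa [Real.sqrt_sq (norm_nonneg _), Real.sqrt_sq (norm_nonneg _)] at this

/-- Along the geodesic from `s₀ = A∘σ₀` to the optimally permuted endpoint
`X* = Y*∘σ*`, the point `s₀` remains a closest point of the set
`S = {A∘σ : σ ∈ S_N}`. -/
theorem stmt2 {N d : ℕ} (A : Fin N → EuclideanSpace ℝ (Fin d))
    (hA : Function.Injective A)
    (σ₀ σstar : Equiv.Perm (Fin N)) (Ystar : Hsp N d)
    (hmin : ∀ σ : Equiv.Perm (Fin N),
      ‖permComp Ystar σstar - permComp (toH A) σ₀‖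
        ≤ ‖permComp Ystar σ - permComp (toH A) σ₀‖)
    (t : ℝ) (ht : t ∈ Set.Icc (0 : ℝ) 1) (σ : Equiv.Perm (Fin N)) :
    ‖(permComp (toH A) σ₀ + t • (permComp Ystar σstar - permComp (toH A) σ₀))
        - permComp (toH A) σ₀‖
      ≤ ‖(permComp (toH A) σ₀ + t • (permComp Ystar σstar - permComp (toH A) σ₀))
        - permComp (toH A) σ‖ := by
  obtain ⟨ht0, ht1⟩ := ht
  set s₀ := permComp (toH A) σ₀
  set Xs := permComp Ystar σstar
  -- Step 1: s₀ is a nearest point of S to X*.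
  have hnear : ‖Xs - s₀‖ ≤ ‖Xs - permComp (toH A) σ‖ := by
    have key : ‖Xs - permComp (toH A) σ‖
        = ‖permComp Ystar (σstar * (σ⁻¹ * σ₀)) - s₀‖ := by
      have : permComp Ystar (σstar * (σ⁻¹ * σ₀)) - s₀
          = permComp (Xs - permComp (toH A) σ) (σ⁻¹ * σ₀) := by
        rw [permComp_sub, permComp_mul, permComp_mul]
        simp [s₀, mul_assoc]
      rw [this, norm_permComp]
    rw [key]
    exact hmin _
  -- Step 2: geodesic argument via inner products.
  set u := Xs - s₀
  set v := permComp (toH A) σ - s₀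
  have hsimp : s₀ + t • u - s₀ = t • u := by abel
  have hsimp2 : s₀ + t • u - permComp (toH A) σ = t • u - v := by
    simp only [v]; abel
  rw [hsimp, hsimp2]
  have hin : 2 * inner ℝ u v ≤ ‖v‖ ^ 2 := by
    have h2 : ‖u‖ ^ 2 ≤ ‖u - v‖ ^ 2 := by
      have : Xs - permComp (toH A) σ = u - v := by simp only [u, v]; abel
      have h := hnear
      rw [this] at h
      exact pow_le_pow_left₀ (norm_nonneg _) h 2
    have expand : ‖u - v‖ ^ 2 = ‖u‖ ^ 2 - 2 * inner ℝ u v + ‖v‖ ^ 2 :=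
      norm_sub_sq_real u v
    nlinarith
  have hsq : ‖t • u‖ ^ 2 ≤ ‖t • u - v‖ ^ 2 := by
    have expand : ‖t • u - v‖ ^ 2 = ‖t • u‖ ^ 2 - 2 * inner ℝ (t • u) v + ‖v‖ ^ 2 :=
      norm_sub_sq_real (t • u) v
    have hi : inner ℝ (t • u) v = t * (inner ℝ u v : ℝ) := real_inner_smul_left u v t
    nlinarith [sq_nonneg ‖v‖, mul_le_mul_of_nonneg_left hin ht0]
  have := Real.sqrt_le_sqrt hsq
  rwa [Real.sqrt_sq (norm_nonneg _), Real.sqrt_sq (norm_nonneg _)] at this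
end

section
/- Let E be a finite-dimensional real inner product space and S ⊆ E a nonempty finite set. Define Φ : E → ℝ by Φ(Y) = (1/2)·dist(Y,S)² = min_{s∈S} ‖Y − s‖²/2. If Φ is differentiable at a point Y ∈ E, then ‖∇Φ(Y)‖² = 2·Φ(Y). -/
/-- The eikonal identity `‖∇Φ‖² = 2Φ` for `Φ = ½ dist(·,S)²`, the half squared
distance function to a nonempty finite set `S`, at every point of differentiability. -/
theorem stmt4 {E : Type*} [NormedAddCommGroup E] [InnerProductSpace ℝ E]
    [FiniteDimensional ℝ E]
    (S : Finset E) (hS : S.Nonempty) (Y : E)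
    (hdiff : DifferentiableAt ℝ (fun Z => Metric.infDist Z (S : Set E) ^ 2 / 2) Y) :
    ‖gradient (fun Z => Metric.infDist Z (S : Set E) ^ 2 / 2) Y‖ ^ 2
      = 2 * (Metric.infDist Y (S : Set E) ^ 2 / 2) := by
  set Φ : E → ℝ := fun Z => Metric.infDist Z (S : Set E) ^ 2 / 2 with hΦ
  obtain ⟨s₀, hs₀S, hs₀⟩ :=
    (S.finite_toSet.isCompact).exists_infDist_eq_dist (by exact_mod_cast hS) Y
  set g : E → ℝ := fun Z => ‖Z - s₀‖ ^ 2 / 2 with hg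
  -- gradient of g at Y
  have hgF : HasFDerivAt g (innerSL ℝ (Y - s₀)) Y := by
    have h1 : HasFDerivAt (fun Z : E => Z - s₀) (ContinuousLinearMap.id ℝ E) Y :=
      (hasFDerivAt_id Y).sub_const s₀
    have h2 := h1.norm_sq
    have h3 := h2.const_smul (2⁻¹:ℝ)
    convert h3 using 1
    · rfl
    · rfl
    · ext Z; simp [hg]; ring
    · ext v
      simp [two_smul]
      ring
  -- Φ ≤ g, with equality at Y
  have hle : ∀ Z, Φ Z ≤ g Z := by
    intro Z
    have h1 : Metric.infDist Z (S : Set E) ≤ dist Z s₀ :=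
      Metric.infDist_le_dist_of_mem hs₀S
    have h2 : Metric.infDist Z (S : Set E) ^ 2 ≤ dist Z s₀ ^ 2 :=
      pow_le_pow_left₀ Metric.infDist_nonneg h1 2
    have : dist Z s₀ = ‖Z - s₀‖ := by rw [dist_eq_norm]
    simp only [hΦ, hg, ← this]
    linarith
  have heq : Φ Y = g Y := by
    simp only [hΦ, hg, hs₀, dist_eq_norm]
  -- g - Φ has a global min at Y
  have hmin : IsLocalMin (fun Z => g Z - Φ Z) Y := by
    apply IsMinOn.isLocalMin (s := Set.univ)
    · intro Z _
      have := hle Z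
      simp only [Set.mem_setOf_eq]
      linarith [hle Z, heq.ge]
    · exact Filter.univ_mem
  have hgd : DifferentiableAt ℝ g Y := hgF.differentiableAt
  have hzero : fderiv ℝ (fun Z => g Z - Φ Z) Y = 0 := hmin.fderiv_eq_zero
  have hsub : fderiv ℝ (fun Z => g Z - Φ Z) Y = fderiv ℝ g Y - fderiv ℝ Φ Y :=
    fderiv_sub hgd hdiff
  have hfeq : fderiv ℝ Φ Y = fderiv ℝ g Y := by
    rw [hsub] at hzero
    have := sub_eq_zero.mp hzero
    exact this.symm
  have hΦgrad : HasGradientAt Φ (Y - s₀) Y := by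
    rw [hasGradientAt_iff_hasFDerivAt]
    have : (InnerProductSpace.toDual ℝ E) (Y - s₀) = innerSL ℝ (Y - s₀) := rfl
    rw [this]
    have := hgF.fderiv
    rw [← this, ← hfeq]
    exact hdiff.hasFDerivAt
  rw [hΦgrad.gradient]
  have : Metric.infDist Y (S : Set E) = ‖Y - s₀‖ := by rw [hs₀, dist_eq_norm]
  rw [this]
  ring
end

section
/- Let E be a finite-dimensional real inner product space and S ⊆ E a nonempty finite set. Define Φ : E → ℝ by Φ(Y) = (1/2)·dist(Y,S)². If Φ is differentiable at a point Y ∈ E, then Y has a unique nearest point s* in S (i.e. s* is the unique element of S with ‖Y − s*‖ = dist(Y,S)) and ∇Φ(Y) = Y − s*. -/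
open Metric

private lemma hasGradientAt_half_norm_sq {E : Type*} [NormedAddCommGroup E]
    [InnerProductSpace ℝ E] [CompleteSpace E] (s Y : E) :
    HasGradientAt (fun Z : E => ‖Z - s‖ ^ 2 / 2) (Y - s) Y := by
  rw [hasGradientAt_iff_hasFDerivAt]
  have h := (((hasFDerivAt_id Y).sub_const s).norm_sq).mul_const (2⁻¹:ℝ)
  convert h using 2
  · ext Z; simp [div_eq_mul_inv]
  · simp [div_eq_mul_inv]
  · ext Z; simp

/-- At a point of differentiability of `Φ = ½ dist(·,S)²`, the point `Y` has a unique
nearest point `s*` in the nonempty finite set `S`, and `∇Φ(Y) = Y − s*`. -/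
theorem stmt5 {E : Type*} [NormedAddCommGroup E] [InnerProductSpace ℝ E]
    [FiniteDimensional ℝ E]
    (S : Finset E) (hS : S.Nonempty) (Y : E)
    (hdiff : DifferentiableAt ℝ (fun Z => Metric.infDist Z (S : Set E) ^ 2 / 2) Y) :
    ∃ sstar ∈ S,
      ‖Y - sstar‖ = Metric.infDist Y (S : Set E)
      ∧ (∀ s ∈ S, ‖Y - s‖ = Metric.infDist Y (S : Set E) → s = sstar)
      ∧ gradient (fun Z => Metric.infDist Z (S : Set E) ^ 2 / 2) Y = Y - sstar := by
  set Φ : E → ℝ := fun Z => Metric.infDist Z (S : Set E) ^ 2 / 2 with hΦ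
  -- any nearest point gives the gradient
  have key : ∀ s ∈ S, ‖Y - s‖ = Metric.infDist Y (S : Set E) →
      HasGradientAt Φ (Y - s) Y := by
    intro s hs hnorm
    set g : E → ℝ := fun Z => ‖Z - s‖ ^ 2 / 2 - Φ Z with hg
    have hmin : IsLocalMin g Y := by
      apply Filter.Eventually.of_forall
      intro Z
      have h1 : Metric.infDist Z (S : Set E) ≤ ‖Z - s‖ := by
        rw [← dist_eq_norm]
        exact Metric.infDist_le_dist_of_mem (by simpa using hs)
      have h0 : (0:ℝ) ≤ Metric.infDist Z (S : Set E) := Metric.infDist_nonneg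
      have hsq : Metric.infDist Z (S : Set E) ^ 2 ≤ ‖Z - s‖ ^ 2 := by
        apply pow_le_pow_left₀ h0 h1
      have hgZ : 0 ≤ g Z := by
        simp only [hg, hΦ]
        linarith
      have hgY : g Y = 0 := by
        simp only [hg, hΦ, hnorm]
        ring
      rw [hgY]; exact hgZ
    have hder : HasFDerivAt g
        ((InnerProductSpace.toDual ℝ E) (Y - s) - fderiv ℝ Φ Y) Y :=
      ((hasGradientAt_half_norm_sq s Y).hasFDerivAt).sub hdiff.hasFDerivAt
    have hzero := hmin.hasFDerivAt_eq_zero hder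
    have hfd : fderiv ℝ Φ Y = (InnerProductSpace.toDual ℝ E) (Y - s) := by
      have := sub_eq_zero.mp hzero
      exact this.symm
    rw [hasGradientAt_iff_hasFDerivAt, ← hfd]
    exact hdiff.hasFDerivAt
  obtain ⟨sstar, hsS, hsd⟩ :=
    (S.finite_toSet.isCompact).exists_infDist_eq_dist (by simpa using hS) Y
  have hnorm : ‖Y - sstar‖ = Metric.infDist Y (S : Set E) := by
    rw [hsd, dist_eq_norm]
  have hgrad := key sstar (by simpa using hsS) hnorm
  refine ⟨sstar, by simpa using hsS, hnorm, ?_, hgrad.gradient⟩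
  intro s hsS' hnorm'
  have hgrad' := key s hsS' hnorm'
  have := hgrad.unique hgrad'
  exact sub_right_injective this.symm
end

section
/- Let E be a finite-dimensional real inner product space and S ⊆ E a nonempty finite set. Define Π : E → ℝ by Π(Y) = max_{s∈S} (⟨Y,s⟩ − ‖s‖²/2). If Π is differentiable at a point X ∈ E, then ∇Π(X) ∈ S and ∇Π(X) is a nearest point of X in S, i.e. ‖X − ∇Π(X)‖ ≤ ‖X − s‖ for every s ∈ S. -/
open scoped InnerProductSpace

lemma aux_hasGradientAt {E : Type*} [NormedAddCommGroup E] [InnerProductSpace ℝ E]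
    [CompleteSpace E] (s₀ : E) (c : ℝ) (X : E) :
    HasGradientAt (fun Y : E => ⟪Y, s₀⟫_ℝ - c) s₀ X := by
  rw [hasGradientAt_iff_hasFDerivAt]
  have h : HasFDerivAt (fun Y : E => ⟪Y, s₀⟫_ℝ - c)
      ((innerSL ℝ s₀ : E →L[ℝ] ℝ)) X := by
    have := ((innerSL ℝ s₀ : E →L[ℝ] ℝ).hasFDerivAt (x := X)).sub_const c
    exact this.congr_of_eventuallyEq (Filter.Eventually.of_forall fun Y => by
      simp only [innerSL_apply_apply, real_inner_comm])
  exact h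

/-- At a point of differentiability of the convex potential
`Π(Y) = max_{s∈S} (⟪Y,s⟫ − ‖s‖²/2)`, the gradient `∇Π(X)` belongs to `S` and is a
nearest point of `X` in `S`: the identification `π(X) = ∇Π(X)`. -/
theorem stmt7 {E : Type*} [NormedAddCommGroup E] [InnerProductSpace ℝ E]
    [FiniteDimensional ℝ E]
    (S : Finset E) (hS : S.Nonempty) (X : E)
    (hdiff : DifferentiableAt ℝ (fun Y : E => S.sup' hS fun s => ⟪Y, s⟫_ℝ - ‖s‖ ^ 2 / 2) X) :
    gradient (fun Y : E => S.sup' hS fun s => ⟪Y, s⟫_ℝ - ‖s‖ ^ 2 / 2) X ∈ S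
    ∧ ∀ s ∈ S,
        ‖X - gradient (fun Y : E => S.sup' hS fun s => ⟪Y, s⟫_ℝ - ‖s‖ ^ 2 / 2) X‖
          ≤ ‖X - s‖ := by
  set P : E → ℝ := fun Y : E => S.sup' hS fun s => ⟪Y, s⟫_ℝ - ‖s‖ ^ 2 / 2 with hP
  obtain ⟨s₀, hs₀S, hs₀⟩ := Finset.exists_mem_eq_sup' hS (fun s => ⟪X, s⟫_ℝ - ‖s‖ ^ 2 / 2)
  set g : E → ℝ := fun Y : E => ⟪Y, s₀⟫_ℝ - ‖s₀‖ ^ 2 / 2 with hg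
  have hgd : HasGradientAt g s₀ X := aux_hasGradientAt s₀ _ X
  -- P - g has a local min at X
  have hle : ∀ Y, g Y ≤ P Y := fun Y =>
    Finset.le_sup' (fun s => ⟪Y, s⟫_ℝ - ‖s‖ ^ 2 / 2) hs₀S
  have heq : P X = g X := hs₀
  have hmin : IsLocalMin (fun Y => P Y - g Y) X := by
    apply isMinOn_univ_iff.mpr (fun Y => ?_) |>.isLocalMin (by simp)
    · simp only [heq, sub_self]
      exact sub_nonneg.mpr (hle Y)
  have hdg : DifferentiableAt ℝ g X := hgd.differentiableAt
  have hfzero : fderiv ℝ (fun Y => P Y - g Y) X = 0 :=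
    hmin.fderiv_eq_zero
  have hfd : fderiv ℝ P X = fderiv ℝ g X := by
    have := fderiv_fun_sub hdiff hdg
    rw [hfzero] at this
    have := this.symm
    rwa [sub_eq_zero] at this
  have hgrad : gradient P X = s₀ := by
    rw [gradient, hfd, ← gradient, hgd.gradient]
  refine ⟨hgrad ▸ hs₀S, fun s hs => ?_⟩
  rw [hgrad]
  have h1 : ⟪X, s⟫_ℝ - ‖s‖ ^ 2 / 2 ≤ ⟪X, s₀⟫_ℝ - ‖s₀‖ ^ 2 / 2 := by
    rw [← hs₀]
    exact Finset.le_sup' (fun t => ⟪X, t⟫_ℝ - ‖t‖ ^ 2 / 2) hs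
  have hsq : ‖X - s₀‖ ^ 2 ≤ ‖X - s‖ ^ 2 := by
    rw [norm_sub_sq_real, norm_sub_sq_real]
    nlinarith [h1]
  exact (pow_le_pow_iff_left₀ (norm_nonneg _) (norm_nonneg _) two_ne_zero).mp hsq
end

section
/- Let E be a real Banach space, R ≥ 0, and let X : ℝ → E be twice continuously differentiable with ‖X''(t) − X(t)‖ ≤ R for all t ∈ ℝ. Then for all t ∈ ℝ: ‖X(t)‖ + ‖X'(t)‖ ≤ 2·(‖X(0)‖ + ‖X'(0)‖ + R)·cosh(t). -/
open Real Set

lemma aux_norm {E : Type*} [NormedAddCommGroup E] [NormedSpace ℝ E] (a b : E) :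
    ‖(WithLp.prodContinuousLinearEquiv 1 ℝ E E).symm (a, b)‖ = ‖a‖ + ‖b‖ := by
  rw [WithLp.prod_norm_eq_add (by norm_num)]
  simp

lemma aux_exp {E : Type*} [NormedAddCommGroup E] [NormedSpace ℝ E]
    (R : ℝ) (hR : 0 ≤ R) (X : ℝ → E) (hX : ContDiff ℝ 2 X)
    (hbound : ∀ t : ℝ, ‖deriv (deriv X) t - X t‖ ≤ R) :
    ∀ t : ℝ, 0 ≤ t → ‖X t‖ + ‖deriv X t‖ ≤ (‖X 0‖ + ‖deriv X 0‖ + R) * Real.exp t := by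
  have hX2 : ContDiff ℝ (1 + 1) X := by norm_num; exact hX
  have hX1 : ContDiff ℝ 1 (deriv X) := (contDiff_succ_iff_deriv.mp hX2).2.2
  have hd1 : ∀ s, HasDerivAt X (deriv X s) s := fun s =>
    ((hX.differentiable two_ne_zero) s).hasDerivAt
  have hd2 : ∀ s, HasDerivAt (deriv X) (deriv (deriv X) s) s := fun s =>
    ((hX1.differentiable one_ne_zero) s).hasDerivAt
  set L : (E × E) →L[ℝ] WithLp 1 (E × E) :=
    ((WithLp.prodContinuousLinearEquiv 1 ℝ E E).symm.toContinuousLinearMap) with hL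
  set F : ℝ → WithLp 1 (E × E) := fun s => L (X s, deriv X s) with hF
  set F' : ℝ → WithLp 1 (E × E) := fun s => L (deriv X s, deriv (deriv X) s) with hF'
  have hFd : ∀ s, HasDerivAt F (F' s) s := fun s =>
    (L.hasFDerivAt.comp_hasDerivAt s ((hd1 s).prodMk (hd2 s)))
  have hnormF : ∀ s, ‖F s‖ = ‖X s‖ + ‖deriv X s‖ := fun s => aux_norm _ _
  have hnormF' : ∀ s, ‖F' s‖ = ‖deriv X s‖ + ‖deriv (deriv X) s‖ := fun s => aux_norm _ _
  intro t ht
  have key := norm_le_gronwallBound_of_norm_deriv_right_le (f := F) (f' := F')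
    (δ := ‖X 0‖ + ‖deriv X 0‖) (K := 1) (ε := R) (a := 0) (b := t)
    (fun s _ => (hFd s).continuousAt.continuousWithinAt)
    (fun s _ => (hFd s).hasDerivWithinAt)
    (by rw [hnormF])
    (fun s _ => by
      rw [hnormF', hnormF, one_mul]
      have h1 : ‖deriv (deriv X) s‖ ≤ ‖X s‖ + R := by
        calc ‖deriv (deriv X) s‖ ≤ ‖deriv (deriv X) s - X s‖ + ‖X s‖ := by
              simpa using norm_add_le (deriv (deriv X) s - X s) (X s)
          _ ≤ ‖X s‖ + R := by linarith [hbound s]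
      linarith)
    t (by constructor <;> linarith)
  rw [hnormF] at key
  have hgb : gronwallBound (‖X 0‖ + ‖deriv X 0‖) 1 R (t - 0) ≤
      (‖X 0‖ + ‖deriv X 0‖ + R) * Real.exp t := by
    rw [gronwallBound_of_K_ne_0 one_ne_zero]
    simp only [one_mul, sub_zero, div_one]
    nlinarith [norm_nonneg (X 0), norm_nonneg (deriv X 0), Real.exp_pos t]
  linarith

/-- No blow-up estimate: if the acceleration of a curve deviates from the position
by at most `R` in norm, then the curve grows at most like `cosh t`. -/
theorem stmt11 {E : Type*} [NormedAddCommGroup E] [NormedSpace ℝ E] [CompleteSpace E]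
    (R : ℝ) (hR : 0 ≤ R) (X : ℝ → E) (hX : ContDiff ℝ 2 X)
    (hbound : ∀ t : ℝ, ‖deriv (deriv X) t - X t‖ ≤ R) :
    ∀ t : ℝ, ‖X t‖ + ‖deriv X t‖ ≤ 2 * (‖X 0‖ + ‖deriv X 0‖ + R) * Real.cosh t := by
  have hX2 : ContDiff ℝ (1 + 1) X := by norm_num; exact hX
  have hX1 : ContDiff ℝ 1 (deriv X) := (contDiff_succ_iff_deriv.mp hX2).2.2
  have hd1 : ∀ s, HasDerivAt X (deriv X s) s := fun s =>
    ((hX.differentiable two_ne_zero) s).hasDerivAt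
  have hd2 : ∀ s, HasDerivAt (deriv X) (deriv (deriv X) s) s := fun s =>
    ((hX1.differentiable one_ne_zero) s).hasDerivAt
  intro t
  have hsum : ‖X t‖ + ‖deriv X t‖ ≤ (‖X 0‖ + ‖deriv X 0‖ + R) * Real.exp |t| := by
    rcases le_or_gt 0 t with hs | hs
    · rw [abs_of_nonneg hs]; exact aux_exp R hR X hX hbound t hs
    · set Y : ℝ → E := fun u => X (-u) with hY
      have hYd : deriv Y = fun u => -deriv X (-u) := by
        funext u
        have h : HasDerivAt Y ((-1 : ℝ) • deriv X (-u)) u :=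
          (hd1 (-u)).scomp u (hasDerivAt_neg u)
        simpa using h.deriv
      have hYdd : ∀ u, deriv (deriv Y) u = deriv (deriv X) (-u) := by
        intro u
        rw [hYd]
        have h : HasDerivAt (fun v => -deriv X (-v)) (-((-1:ℝ) • deriv (deriv X) (-u))) u :=
          ((hd2 (-u)).scomp u (hasDerivAt_neg u)).neg
        simpa using h.deriv
      have hYc : ContDiff ℝ 2 Y := hX.comp contDiff_id.neg
      have key := aux_exp R hR Y hYc
        (fun u => by rw [hYdd]; simpa [hY] using hbound (-u)) (-t) (by linarith)
      rw [abs_of_neg hs]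
      rw [hYd] at key
      simp only [hY, hYd, neg_neg, neg_zero, norm_neg] at key
      exact key
  have hexp : Real.exp |t| ≤ 2 * Real.cosh t := by
    rw [Real.cosh_eq]
    rcases abs_cases t with ⟨h,_⟩|⟨h,_⟩ <;> rw [h] <;>
      nlinarith [Real.exp_pos t, Real.exp_pos (-t)]
  have h0 : 0 ≤ ‖X 0‖ + ‖deriv X 0‖ + R := by positivity
  nlinarith [Real.exp_pos |t|]
end

section
/- Suppose X : ℝ → H is twice continuously differentiable and for every t ∈ ℝ there exists a permutation σ_t ∈ S_N such that X''(t)(a) = X(t)(a) − A(σ_t(a)) for all a ∈ {1,…,N}. Then for all t ∈ ℝ: ‖X(t)‖ + ‖X'(t)‖ ≤ 2·(‖X(0)‖ + ‖X'(0)‖ + √N·R)·cosh(t), where R = max_a |A(a)|. In particular, solutions of the discrete Monge–Ampère gravitational system never run away to infinity in finite time. -/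
private lemma exp_growth_nonneg {E : Type*} [NormedAddCommGroup E] [NormedSpace ℝ E]
    {Z : ℝ → E} {ε : ℝ} (hε : 0 ≤ ε) (hZ : Differentiable ℝ Z)
    (hb : ∀ t, ‖deriv Z t‖ ≤ ‖Z t‖ + ε) {t : ℝ} (ht : 0 ≤ t) :
    ‖Z t‖ ≤ (‖Z 0‖ + ε) * Real.exp t := by
  have h := norm_le_gronwallBound_of_norm_deriv_right_le (f := Z) (f' := deriv Z)
    (δ := ‖Z 0‖) (K := 1) (ε := ε) (a := 0) (b := t)
    hZ.continuous.continuousOn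
    (fun x _ => (hZ x).hasDerivAt.hasDerivWithinAt)
    le_rfl (fun x _ => by simpa using hb x) t ⟨ht, le_rfl⟩
  rw [sub_zero, gronwallBound_of_K_ne_0 one_ne_zero] at h
  have h' : ‖Z t‖ ≤ ‖Z 0‖ * Real.exp t + ε * (Real.exp t - 1) := by simpa using h
  nlinarith [Real.exp_pos t]

private lemma exp_growth {E : Type*} [NormedAddCommGroup E] [NormedSpace ℝ E]
    {Z : ℝ → E} {ε : ℝ} (hε : 0 ≤ ε) (hZ : Differentiable ℝ Z)
    (hb : ∀ t, ‖deriv Z t‖ ≤ ‖Z t‖ + ε) (t : ℝ) :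
    ‖Z t‖ ≤ (‖Z 0‖ + ε) * Real.exp |t| := by
  rcases le_or_gt 0 t with ht | ht
  · rw [abs_of_nonneg ht]; exact exp_growth_nonneg hε hZ hb ht
  · set W : ℝ → E := fun s => Z (-s) with hW
    have hWd : ∀ s : ℝ, HasDerivAt W ((-1 : ℝ) • deriv Z (-s)) s := by
      intro s
      exact (hZ (-s)).hasDerivAt.scomp s ((hasDerivAt_neg s))
    have hWdiff : Differentiable ℝ W := fun s => (hWd s).differentiableAt
    have hWderiv : ∀ s, deriv W s = -(deriv Z (-s)) := by
      intro s; rw [(hWd s).deriv]; simp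
    have hWb : ∀ s, ‖deriv W s‖ ≤ ‖W s‖ + ε := by
      intro s; rw [hWderiv, norm_neg]; exact hb (-s)
    have := exp_growth_nonneg hε hWdiff hWb (t := -t) (by linarith)
    simpa [hW, abs_of_neg ht] using this

/-- Solutions of the discrete Monge–Ampère gravitational system
`X''(t)(a) = X(t)(a) − A(σ_t(a))` never run away to infinity in finite time:
they grow at most like `cosh t`, with `R = maxₐ |A(a)|`. -/
theorem stmt13 {N d : ℕ} (hN : 0 < N) (A : Fin N → EuclideanSpace ℝ (Fin d))
    (hA : Function.Injective A)
    (R : ℝ) (hR : R = Finset.univ.sup' ⟨⟨0, hN⟩, Finset.mem_univ _⟩ fun a => ‖A a‖)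
    (X : ℝ → Hsp N d) (hX : ContDiff ℝ 2 X)
    (hsys : ∀ t : ℝ, ∃ σ : Equiv.Perm (Fin N),
      ∀ a : Fin N, deriv (deriv X) t a = X t a - A (σ a)) :
    ∀ t : ℝ,
      ‖X t‖ + ‖deriv X t‖
        ≤ 2 * (‖X 0‖ + ‖deriv X 0‖ + Real.sqrt N * R) * Real.cosh t := by
  have : ContinuousSMul ℝ (Hsp N d) := IsBoundedSMul.continuousSMul
  -- basic regularity
  have hX1 : Differentiable ℝ X := hX.differentiable (by norm_num)
  have hXd : ContDiff ℝ 1 (deriv X) := by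
    have hX2 : ContDiff ℝ (1 + 1) X := by
      rw [show ((1 : WithTop ℕ∞) + 1) = 2 by norm_num]; exact hX
    exact (contDiff_succ_iff_deriv.mp hX2).2.2
  have hXd1 : Differentiable ℝ (deriv X) := hXd.differentiable (by norm_num)
  -- R ≥ 0
  have hRA : ∀ a : Fin N, ‖A a‖ ≤ R := by
    intro a; rw [hR]; exact Finset.le_sup' (fun a => ‖A a‖) (Finset.mem_univ a)
  have hR0 : 0 ≤ R := le_trans (norm_nonneg _) (hRA ⟨0, hN⟩)
  set ε : ℝ := Real.sqrt N * R with hε_def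
  have hε : 0 ≤ ε := mul_nonneg (Real.sqrt_nonneg _) hR0
  -- the second derivative bound
  have hsecond : ∀ t, ‖deriv (deriv X) t‖ ≤ ‖X t‖ + ε := by
    intro t
    obtain ⟨σ, hσ⟩ := hsys t
    set v : Hsp N d := (WithLp.equiv 2 _).symm (fun a => A (σ a)) with hv
    have heq : deriv (deriv X) t = X t - v := PiLp.ext fun a => hσ a
    rw [heq]
    refine (norm_sub_le _ _).trans (add_le_add le_rfl ?_)
    have hnv : ‖v‖ = Real.sqrt (∑ a : Fin N, ‖A (σ a)‖ ^ 2) := by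
      rw [PiLp.norm_eq_of_L2]; rfl
    rw [hnv, hε_def]
    have hsum : (∑ a : Fin N, ‖A (σ a)‖ ^ 2) ≤ (N : ℝ) * R ^ 2 := by
      calc (∑ a : Fin N, ‖A (σ a)‖ ^ 2) ≤ ∑ _a : Fin N, R ^ 2 :=
            Finset.sum_le_sum fun a _ => by
              have := hRA (σ a); nlinarith [norm_nonneg (A (σ a))]
        _ = (N : ℝ) * R ^ 2 := by simp [mul_comm]
    calc Real.sqrt (∑ a : Fin N, ‖A (σ a)‖ ^ 2) ≤ Real.sqrt ((N : ℝ) * R ^ 2) :=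
          Real.sqrt_le_sqrt hsum
      _ = Real.sqrt N * R := by
          rw [Real.sqrt_mul (Nat.cast_nonneg N), Real.sqrt_sq hR0]
  -- the combined curve in the ℓ¹ product space
  set E := WithLp 1 (Hsp N d × Hsp N d) with hE
  let e : E ≃L[ℝ] Hsp N d × Hsp N d := WithLp.prodContinuousLinearEquiv 1 ℝ _ _
  have hnorm : ∀ x y : Hsp N d, ‖e.symm (x, y)‖ = ‖x‖ + ‖y‖ := by
    intro x y
    rw [WithLp.prod_norm_eq_add (by norm_num)]
    norm_num [show (e.symm (x, y)).fst = x from rfl, show (e.symm (x, y)).snd = y from rfl]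
  set Z : ℝ → E := fun t => e.symm (X t, deriv X t) with hZdef
  have : ContinuousSMul ℝ E := IsBoundedSMul.continuousSMul
  have hZd : ∀ t, HasDerivAt Z (e.symm (deriv X t, deriv (deriv X) t)) t := by
    intro t
    have h1 : HasDerivAt (fun t => (X t, deriv X t)) (deriv X t, deriv (deriv X) t) t :=
      HasDerivAt.prodMk (hX1 t).hasDerivAt (hXd1 t).hasDerivAt
    exact (e.symm.toContinuousLinearMap.hasFDerivAt.comp_hasDerivAt t h1)
  have hZdiff : Differentiable ℝ Z := fun t => (hZd t).differentiableAt
  have hZb : ∀ t, ‖deriv Z t‖ ≤ ‖Z t‖ + ε := by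
    intro t
    rw [(hZd t).deriv, hnorm, hnorm]
    have := hsecond t
    linarith
  intro t
  have hmain := exp_growth hε hZdiff hZb t
  rw [hZdef] at hmain
  simp only [hnorm] at hmain
  have hZt : ‖X t‖ + ‖deriv X t‖ ≤ (‖X 0‖ + ‖deriv X 0‖ + ε) * Real.exp |t| := hmain
  have hcosh : Real.exp |t| ≤ 2 * Real.cosh t := by
    rw [Real.cosh_eq]
    rcases abs_cases t with ⟨h1, _⟩ | ⟨h1, _⟩ <;> rw [h1] <;>
      nlinarith [Real.exp_pos t, Real.exp_pos (-t)]
  have hC : 0 ≤ ‖X 0‖ + ‖deriv X 0‖ + ε := by positivity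
  calc ‖X t‖ + ‖deriv X t‖ ≤ (‖X 0‖ + ‖deriv X 0‖ + ε) * Real.exp |t| := hZt
    _ ≤ (‖X 0‖ + ‖deriv X 0‖ + ε) * (2 * Real.cosh t) := by
        exact mul_le_mul_of_nonneg_left hcosh hC
    _ = 2 * (‖X 0‖ + ‖deriv X 0‖ + Real.sqrt N * R) * Real.cosh t := by
        rw [hε_def]; ring
end

section
/- Let λ be the Lebesgue measure restricted to the unit cube [0,1]^d, and let ρ be a Borel probability measure on ℝ^d with finite second moment that is absolutely continuous with respect to the Lebesgue measure. Suppose ψ₁, ψ₂ : ℝ^d → ℝ are Lipschitz convex functions and T₁, T₂ : ℝ^d → ℝ^d are Borel measurable maps with T_i(y) = ∇ψ_i(y) for ρ-almost every y and with the pushforward of ρ under T_i equal to λ, for i = 1, 2. Then T₁ = T₂ ρ-almost everywhere. -/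
open MeasureTheory RealInnerProductSpace ENNReal

variable {E : Type*} [NormedAddCommGroup E] [InnerProductSpace ℝ E] [CompleteSpace E]

lemma hasDerivAt_line {ψ : E → ℝ} {g y : E} (h : HasGradientAt ψ g y) (u : E) :
    HasDerivAt (fun t : ℝ => ψ (y + t • u)) ⟪g, u⟫ 0 := by
  have hL : HasDerivAt (fun t : ℝ => y + t • u) u 0 := by
    simpa using ((hasDerivAt_id (0 : ℝ)).smul_const u).const_add y
  have h' : HasFDerivAt ψ (InnerProductSpace.toDual ℝ E g) (y + (0:ℝ) • u) := by
    simpa using h.hasFDerivAt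
  have := h'.comp_hasDerivAt 0 hL
  simpa [InnerProductSpace.toDual_apply_apply, Function.comp_def] using this

/-- Gradient inequality for convex functions. -/
lemma grad_ineq {ψ : E → ℝ} (hconv : ConvexOn ℝ Set.univ ψ) {g y : E}
    (h : HasGradientAt ψ g y) (z : E) : ψ y + ⟪g, z - y⟫ ≤ ψ z := by
  set u := z - y with hu
  have hφ : ConvexOn ℝ Set.univ (fun t : ℝ => ψ (y + t • u)) := by
    have := hconv.comp_affineMap (AffineMap.lineMap y z : ℝ →ᵃ[ℝ] E)
    simpa [Function.comp_def, AffineMap.lineMap_apply, hu, add_comm] using this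
  have hd : HasDerivAt (fun t : ℝ => ψ (y + t • u)) ⟪g, u⟫ 0 := hasDerivAt_line h u
  have hten := hasDerivAt_iff_tendsto_slope.1 hd
  have hle : ⟪g, u⟫ ≤ ψ (y + (1:ℝ) • u) - ψ (y + (0:ℝ) • u) := by
    have hev : ∀ᶠ t in nhdsWithin (0:ℝ) {(0:ℝ)}ᶜ,
        slope (fun t : ℝ => ψ (y + t • u)) 0 t
          ≤ ψ (y + (1:ℝ) • u) - ψ (y + (0:ℝ) • u) := by
      filter_upwards [self_mem_nhdsWithin,
        nhdsWithin_le_nhds (Iio_mem_nhds (by norm_num : (0:ℝ) < 1))] with t ht ht1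
      have := hφ.secant_mono (a := 0) (x := t) (y := 1) trivial trivial trivial
        ht (by norm_num) (le_of_lt ht1)
      simpa [slope_def_field, div_one] using this
    exact le_of_tendsto hten hev
  have hyz : y + u = z := by rw [hu]; abel
  simp only [one_smul, zero_smul, add_zero, hyz] at hle
  linarith

/-- A subgradient at a point of differentiability equals the gradient. -/
lemma subgrad_unique {ψ : E → ℝ} {g v y : E} (h : HasGradientAt ψ g y)
    (hsub : ∀ z, ψ y + ⟪v, z - y⟫ ≤ ψ z) : v = g := by
  have key : ∀ u : E, ⟪v, u⟫ ≤ ⟪g, u⟫ := by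
    intro u
    have hd : HasDerivAt (fun t : ℝ => ψ (y + t • u)) ⟪g, u⟫ 0 := hasDerivAt_line h u
    have hten := hasDerivAt_iff_tendsto_slope.1 hd
    have hten' : Filter.Tendsto (slope (fun t : ℝ => ψ (y + t • u)) 0)
        (nhdsWithin (0:ℝ) (Set.Ioi 0)) (nhds ⟪g, u⟫) :=
      hten.mono_left (nhdsWithin_mono 0 (fun t ht => ne_of_gt ht))
    refine ge_of_tendsto hten' ?_
    filter_upwards [self_mem_nhdsWithin] with t (ht : (0:ℝ) < t)
    have h2 : ψ y + t * ⟪v, u⟫ ≤ ψ (y + t • u) := by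
      simpa [inner_smul_right] using hsub (y + t • u)
    rw [slope_def_field]
    rw [le_div_iff₀ (by simpa using ht)]
    simp only [zero_smul, add_zero, sub_zero]
    nlinarith
  have hk := key (v - g)
  have h2 : ⟪v - g, v - g⟫ ≤ 0 := by
    rw [inner_sub_left]; linarith
  exact sub_eq_zero.mp (real_inner_self_nonpos.mp h2)

/-- Norm bound on the gradient of a Lipschitz function. -/
lemma grad_norm_le {ψ : E → ℝ} {K : NNReal} (hlip : LipschitzWith K ψ) {g y : E}
    (h : HasGradientAt ψ g y) : ‖g‖ ≤ K := by
  have := h.hasFDerivAt.le_of_lipschitz hlip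
  simpa using this

section Core

variable [TopologicalSpace.SeparableSpace E] [Nonempty E]
  [MeasurableSpace E] [BorelSpace E]

/-- Core argument: transfer the Legendre transform through equal pushforwards. -/
lemma core_lemma (ρ : Measure E) [IsProbabilityMeasure ρ]
    (hnorm : Integrable (fun y => ‖y‖) ρ)
    (ψ : E → ℝ) (K : NNReal) (hlip : LipschitzWith K ψ) (hconv : ConvexOn ℝ Set.univ ψ)
    (T₁ T₂ : E → E) (hT₁meas : Measurable T₁) (hT₂meas : Measurable T₂)
    (hgrad : ∀ᵐ y ∂ρ, HasGradientAt ψ (T₁ y) y)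
    (C : ℝ) (hbdd : ∀ᵐ y ∂ρ, ‖T₂ y‖ ≤ C)
    (hpush : Measure.map T₁ ρ = Measure.map T₂ ρ) :
    (∫ y, ⟪T₂ y, y⟫ ∂ρ ≤ ∫ y, ⟪T₁ y, y⟫ ∂ρ) ∧
      ((∫ y, ⟪T₁ y, y⟫ ∂ρ ≤ ∫ y, ⟪T₂ y, y⟫ ∂ρ) →
        ∀ᵐ y ∂ρ, ∀ z, ψ y + ⟪T₂ y, z - y⟫ ≤ ψ z) := by
  classical
  set u : ℕ → E := TopologicalSpace.denseSeq E with hu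
  set F : E → ℝ≥0∞ := fun x => ⨆ n, ENNReal.ofReal (⟪x, u n⟫ - ψ (u n) + ψ 0) with hF
  have hψcont : Continuous ψ := hlip.continuous
  have hFmeas : Measurable F := by
    refine Measurable.iSup fun n => ENNReal.measurable_ofReal.comp ?_
    exact (((continuous_id.inner continuous_const).sub continuous_const).add
      continuous_const).measurable
  -- F dominates all Fenchel terms
  have hFge : ∀ x z : E, ENNReal.ofReal (⟪x, z⟫ - ψ z + ψ 0) ≤ F x := by
    intro x z
    have hd : DenseRange u := TopologicalSpace.denseRange_denseSeq E
    obtain ⟨v, hvmem, hvlim⟩ := mem_closure_iff_seq_limit.1 (hd z)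
    have hcont : Filter.Tendsto (fun k => ENNReal.ofReal (⟪x, v k⟫ - ψ (v k) + ψ 0))
        Filter.atTop (nhds (ENNReal.ofReal (⟪x, z⟫ - ψ z + ψ 0))) := by
      have : Continuous fun w => ENNReal.ofReal (⟪x, w⟫ - ψ w + ψ 0) :=
        ENNReal.continuous_ofReal.comp
          (((continuous_const.inner continuous_id).sub hψcont).add continuous_const)
      exact (this.tendsto z).comp hvlim
    refine le_of_tendsto hcont (Filter.Eventually.of_forall fun k => ?_)
    obtain ⟨n, hn⟩ := hvmem k
    rw [← hn]
    exact le_iSup (fun n => ENNReal.ofReal (⟪x, u n⟫ - ψ (u n) + ψ 0)) n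
  -- value of F at a gradient
  have hFle : ∀ y g : E, HasGradientAt ψ g y →
      F g = ENNReal.ofReal (⟪g, y⟫ - ψ y + ψ 0) := by
    intro y g hg
    refine le_antisymm (iSup_le fun n => ?_) (hFge g y)
    refine ENNReal.ofReal_le_ofReal ?_
    have := grad_ineq hconv hg (u n)
    rw [inner_sub_right] at this
    linarith
  -- nonnegativity of the Fenchel term at a gradient point
  have htermpos : ∀ y g : E, HasGradientAt ψ g y → 0 ≤ ⟪g, y⟫ - ψ y + ψ 0 := by
    intro y g hg
    have := grad_ineq hconv hg 0
    rw [inner_sub_right, inner_zero_right] at this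
    linarith
  -- integrability facts
  have hT₁bdd : ∀ᵐ y ∂ρ, ‖T₁ y‖ ≤ K := by
    filter_upwards [hgrad] with y hy using grad_norm_le hlip hy
  have hin₁meas : Measurable fun y => ⟪T₁ y, y⟫ := hT₁meas.inner measurable_id
  have hin₂meas : Measurable fun y => ⟪T₂ y, y⟫ := hT₂meas.inner measurable_id
  have hin₁ : Integrable (fun y => ⟪T₁ y, y⟫) ρ := by
    refine Integrable.mono' (hnorm.const_mul K) hin₁meas.aestronglyMeasurable ?_
    filter_upwards [hT₁bdd] with y hy
    calc ‖⟪T₁ y, y⟫‖ ≤ ‖T₁ y‖ * ‖y‖ := norm_inner_le_norm _ _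
      _ ≤ K * ‖y‖ := by gcongr
  have hin₂ : Integrable (fun y => ⟪T₂ y, y⟫) ρ := by
    refine Integrable.mono' (hnorm.const_mul C) hin₂meas.aestronglyMeasurable ?_
    filter_upwards [hbdd] with y hy
    calc ‖⟪T₂ y, y⟫‖ ≤ ‖T₂ y‖ * ‖y‖ := norm_inner_le_norm _ _
      _ ≤ C * ‖y‖ := by gcongr
  have hψint : Integrable ψ ρ := by
    refine Integrable.mono' ((integrable_const |ψ 0|).add (hnorm.const_mul K))
      hψcont.measurable.aestronglyMeasurable (Filter.Eventually.of_forall fun y => ?_)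
    have h1 : ‖ψ y - ψ 0‖ ≤ K * ‖y‖ := by
      simpa [dist_eq_norm] using hlip.dist_le_mul y 0
    have h2 := abs_add_le (ψ 0) (ψ y - ψ 0)
    rw [add_sub_cancel] at h2
    have h3 : |ψ y - ψ 0| ≤ K * ‖y‖ := h1
    calc ‖ψ y‖ = |ψ y| := rfl
      _ ≤ |ψ 0| + K * ‖y‖ := by linarith
  set term : (E → E) → E → ℝ := fun T y => ⟪T y, y⟫ - ψ y + ψ 0 with hterm
  have hsub₁ : Integrable (fun y => ⟪T₁ y, y⟫ - ψ y) ρ := hin₁.sub hψint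
  have hsub₂ : Integrable (fun y => ⟪T₂ y, y⟫ - ψ y) ρ := hin₂.sub hψint
  have hterm₁int : Integrable (term T₁) ρ := hsub₁.add (integrable_const (ψ 0))
  have hterm₂int : Integrable (term T₂) ρ := hsub₂.add (integrable_const (ψ 0))
  -- lintegral of F ∘ T₁ is finite
  have hlcongr : ∫⁻ y, F (T₁ y) ∂ρ = ∫⁻ y, ENNReal.ofReal (term T₁ y) ∂ρ := by
    refine lintegral_congr_ae ?_
    filter_upwards [hgrad] with y hy using hFle y (T₁ y) hy
  have hlfin : ∫⁻ y, F (T₁ y) ∂ρ < ⊤ := by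
    rw [hlcongr]
    calc ∫⁻ y, ENNReal.ofReal (term T₁ y) ∂ρ
        ≤ ∫⁻ y, (‖term T₁ y‖₊ : ℝ≥0∞) ∂ρ := by
          refine lintegral_mono fun y => ?_
          rw [← enorm_eq_nnnorm, Real.enorm_eq_ofReal_abs]
          exact ENNReal.ofReal_le_ofReal (le_abs_self _)
      _ < ⊤ := hterm₁int.2
  have hlmap : ∫⁻ y, F (T₂ y) ∂ρ = ∫⁻ y, F (T₁ y) ∂ρ := by
    rw [← lintegral_map hFmeas hT₂meas, ← lintegral_map hFmeas hT₁meas, hpush]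
  have hfin₂ : ∀ᵐ y ∂ρ, F (T₂ y) < ⊤ :=
    ae_lt_top (hFmeas.comp hT₂meas) (by rw [hlmap]; exact hlfin.ne)
  -- real-valued version
  set Ft : E → ℝ := fun x => (F x).toReal with hFt
  have hFtmeas : Measurable Ft := hFmeas.ennreal_toReal
  have hFtT₁ : (fun y => Ft (T₁ y)) =ᵐ[ρ] term T₁ := by
    filter_upwards [hgrad] with y hy
    rw [hFt]
    simp only
    rw [hFle y (T₁ y) hy, ENNReal.toReal_ofReal (htermpos y (T₁ y) hy)]
  have hFtT₁int : Integrable (fun y => Ft (T₁ y)) ρ := hterm₁int.congr hFtT₁.symm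
  have hFtmap : Integrable Ft (Measure.map T₁ ρ) := by
    refine (integrable_map_measure hFtmeas.aestronglyMeasurable hT₁meas.aemeasurable).2 ?_
    exact hFtT₁int
  have hFtT₂int : Integrable (fun y => Ft (T₂ y)) ρ := by
    have := (integrable_map_measure hFtmeas.aestronglyMeasurable hT₂meas.aemeasurable).1
      (hpush ▸ hFtmap)
    exact this
  have hinteq : ∫ y, Ft (T₂ y) ∂ρ = ∫ y, Ft (T₁ y) ∂ρ := by
    rw [← integral_map hT₂meas.aemeasurable hFtmeas.aestronglyMeasurable,
      ← integral_map hT₁meas.aemeasurable hFtmeas.aestronglyMeasurable, hpush]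
  -- the nonnegative defect
  set h : E → ℝ := fun y => Ft (T₂ y) - term T₂ y with hh
  have hhint : Integrable h ρ := hFtT₂int.sub hterm₂int
  have hhnonneg : 0 ≤ᵐ[ρ] h := by
    filter_upwards [hfin₂] with y hy
    have h1 : ENNReal.ofReal (term T₂ y) ≤ F (T₂ y) := hFge (T₂ y) y
    have h2 : (ENNReal.ofReal (term T₂ y)).toReal ≤ Ft (T₂ y) :=
      ENNReal.toReal_mono hy.ne h1
    rw [ENNReal.toReal_ofReal'] at h2
    have : term T₂ y ≤ Ft (T₂ y) := le_trans (le_max_left _ _) h2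
    simp only [hh, Pi.zero_apply]
    linarith
  have hintdiff : ∫ y, h y ∂ρ = ∫ y, ⟪T₁ y, y⟫ ∂ρ - ∫ y, ⟪T₂ y, y⟫ ∂ρ := by
    rw [hh]
    rw [integral_sub hFtT₂int hterm₂int, hinteq, integral_congr_ae hFtT₁]
    have e1 : ∫ y, term T₁ y ∂ρ = ∫ y, ⟪T₁ y, y⟫ ∂ρ - ∫ y, ψ y ∂ρ + ψ 0 := by
      rw [hterm]
      simp only
      rw [integral_add hsub₁ (integrable_const _), integral_sub hin₁ hψint]
      simp [measure_univ]
    have e2 : ∫ y, term T₂ y ∂ρ = ∫ y, ⟪T₂ y, y⟫ ∂ρ - ∫ y, ψ y ∂ρ + ψ 0 := by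
      rw [hterm]
      simp only
      rw [integral_add hsub₂ (integrable_const _), integral_sub hin₂ hψint]
      simp [measure_univ]
    rw [e1, e2]; ring
  constructor
  · have h0 : 0 ≤ ∫ y, h y ∂ρ := integral_nonneg_of_ae hhnonneg
    rw [hintdiff] at h0; linarith
  · intro hle
    have h0 : ∫ y, h y ∂ρ = 0 := by
      have h1 : 0 ≤ ∫ y, h y ∂ρ := integral_nonneg_of_ae hhnonneg
      rw [hintdiff] at h1 ⊢; linarith
    have hzero : h =ᵐ[ρ] 0 :=
      (integral_eq_zero_iff_of_nonneg_ae hhnonneg hhint).1 h0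
    filter_upwards [hzero, hfin₂] with y hy0 hyfin
    intro z
    have hterm2 : Ft (T₂ y) = term T₂ y := by
      have : h y = 0 := hy0
      rw [hh] at this; simp only at this; linarith
    have hnn : 0 ≤ term T₂ y := hterm2 ▸ ENNReal.toReal_nonneg
    have hFeq : F (T₂ y) = ENNReal.ofReal (term T₂ y) := by
      rw [← hterm2, hFt]
      exact (ENNReal.ofReal_toReal hyfin.ne).symm
    have hle2 := hFge (T₂ y) z
    rw [hFeq] at hle2
    have hreal : ⟪T₂ y, z⟫ - ψ z + ψ 0 ≤ term T₂ y := by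
      rcases le_or_gt (⟪T₂ y, z⟫ - ψ z + ψ 0) 0 with hc | hc
      · linarith
      · exact (ENNReal.ofReal_le_ofReal_iff hnn).1 hle2
    rw [hterm] at hreal
    simp only at hreal
    rw [inner_sub_right]
    linarith

end Core

/-- Uniqueness part of Brenier's theorem (Theorem 1.1 of the paper): two Borel maps
that are `ρ`-a.e. gradients of Lipschitz convex functions and push `ρ` forward to the
Lebesgue measure `λ` on the unit cube coincide `ρ`-almost everywhere. -/
theorem stmt16 (d : ℕ) (ρ : Measure (EuclideanSpace ℝ (Fin d)))
    [IsProbabilityMeasure ρ]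
    (hmom : Integrable (fun y => ‖y‖ ^ 2) ρ)
    (hac : ρ ≪ volume)
    (ψ₁ ψ₂ : EuclideanSpace ℝ (Fin d) → ℝ) (K₁ K₂ : NNReal)
    (hψ₁lip : LipschitzWith K₁ ψ₁) (hψ₂lip : LipschitzWith K₂ ψ₂)
    (hψ₁conv : ConvexOn ℝ Set.univ ψ₁) (hψ₂conv : ConvexOn ℝ Set.univ ψ₂)
    (T₁ T₂ : EuclideanSpace ℝ (Fin d) → EuclideanSpace ℝ (Fin d))
    (hT₁meas : Measurable T₁) (hT₂meas : Measurable T₂)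
    (hT₁grad : ∀ᵐ y ∂ρ, HasGradientAt ψ₁ (T₁ y) y)
    (hT₂grad : ∀ᵐ y ∂ρ, HasGradientAt ψ₂ (T₂ y) y)
    (hT₁push : Measure.map T₁ ρ
      = volume.restrict (WithLp.ofLp ⁻¹' (Set.univ.pi fun _ : Fin d => Set.Icc (0 : ℝ) 1)))
    (hT₂push : Measure.map T₂ ρ
      = volume.restrict (WithLp.ofLp ⁻¹' (Set.univ.pi fun _ : Fin d => Set.Icc (0 : ℝ) 1))) :
    ∀ᵐ y ∂ρ, T₁ y = T₂ y := by
  have hnorm : Integrable (fun y : EuclideanSpace ℝ (Fin d) => ‖y‖) ρ := by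
    refine Integrable.mono' ((integrable_const 1).add hmom)
      continuous_norm.measurable.aestronglyMeasurable
      (Filter.Eventually.of_forall fun y => ?_)
    have h0 : (0:ℝ) ≤ ‖y‖ := norm_nonneg y
    rw [norm_norm]
    show ‖y‖ ≤ 1 + ‖y‖ ^ 2
    nlinarith
  have hpush : Measure.map T₁ ρ = Measure.map T₂ ρ := hT₁push.trans hT₂push.symm
  have hbdd₁ : ∀ᵐ y ∂ρ, ‖T₁ y‖ ≤ (K₁ : ℝ) := by
    filter_upwards [hT₁grad] with y hy using grad_norm_le hψ₁lip hy
  have hbdd₂ : ∀ᵐ y ∂ρ, ‖T₂ y‖ ≤ (K₂ : ℝ) := by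
    filter_upwards [hT₂grad] with y hy using grad_norm_le hψ₂lip hy
  have c1 := core_lemma ρ hnorm ψ₁ K₁ hψ₁lip hψ₁conv T₁ T₂ hT₁meas hT₂meas hT₁grad
    K₂ hbdd₂ hpush
  have c2 := core_lemma ρ hnorm ψ₂ K₂ hψ₂lip hψ₂conv T₂ T₁ hT₂meas hT₁meas hT₂grad
    K₁ hbdd₁ hpush.symm
  have hsub := c1.2 c2.1
  filter_upwards [hsub, hT₁grad] with y hs hg
  exact (subgrad_unique hg hs).symm
end

section
/- Let λ be the Lebesgue measure restricted to the unit cube [0,1]^d, viewed as a probability measure. Let X : [0,1]^d → ℝ^d be a Borel measurable, λ-square-integrable map such that the pushforward ρ of λ under X is absolutely continuous with respect to the Lebesgue measure on ℝ^d. Let ψ : ℝ^d → ℝ be a Lipschitz convex function and T : ℝ^d → ℝ^d a Borel map with T(y) = ∇ψ(y) for ρ-almost every y and with the pushforward of ρ under T equal to λ. Then for every Borel measure-preserving map s : [0,1]^d → [0,1]^d (i.e. the pushforward of λ under s equals λ): ∫_{[0,1]^d} |X(a) − T(X(a))|² dλ(a) ≤ ∫_{[0,1]^d} |X(a) − s(a)|²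 dλ(a). -/
open MeasureTheory
open scoped RealInnerProductSpace ENNReal

section Aux

variable {E : Type*} [NormedAddCommGroup E] [InnerProductSpace ℝ E]

/-- Subgradient inequality for a convex function with a gradient. -/
lemma grad_subgrad [CompleteSpace E] {ψ : E → ℝ} (hconv : ConvexOn ℝ Set.univ ψ)
    {g y : E} (h : HasGradientAt ψ g y) (z : E) :
    ψ y + ⟪g, z - y⟫ ≤ ψ z := by
  set c : ℝ → E := fun t => t • (z - y) + y with hc
  have hcd : ∀ t : ℝ, HasDerivAt c (z - y) t := by
    intro t
    simpa [hc] using ((hasDerivAt_id t).smul_const (z - y)).add_const y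
  have hψd : HasFDerivAt ψ (InnerProductSpace.toDual ℝ E g) y := h.hasFDerivAt
  have hf : HasDerivAt (fun t => ψ (c t)) ⟪g, z - y⟫ 0 := by
    have h0 : c 0 = y := by simp [hc]
    have hψd' : HasFDerivAt ψ (InnerProductSpace.toDual ℝ E g) (c 0) := h0 ▸ hψd
    have := hψd'.comp_hasDerivAt 0 (hcd 0)
    simpa [InnerProductSpace.toDual_apply_apply, Function.comp_def] using this
  have hconv' : ConvexOn ℝ Set.univ (fun t : ℝ => ψ (c t)) := by
    have h1 := hconv.comp_affineMap (AffineMap.lineMap y z)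
    simp only [Set.preimage_univ] at h1
    have heq : (fun t : ℝ => ψ (c t)) = ψ ∘ (AffineMap.lineMap y z) := by
      funext t
      simp [hc, AffineMap.lineMap_apply]
    rw [heq]; exact h1
  have hs := hconv'.le_slope_of_hasDerivAt (Set.mem_univ (0:ℝ)) (Set.mem_univ 1) one_pos hf
  have hc1 : c 1 = z := by simp [hc]
  have hc0 : c 0 = y := by simp [hc]
  rw [slope_def_field, hc1, hc0] at hs
  have : ⟪g, z - y⟫ ≤ ψ z - ψ y := by simpa using hs
  linarith

/-- The Fenchel term at any point is below the countable-sup conjugate. -/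
lemma auxA {ψ : E → ℝ} (hψc : Continuous ψ) {u : ℕ → E} (hu : DenseRange u) (x y : E) :
    ENNReal.ofReal (⟪x, y⟫ - ψ y + ψ 0)
      ≤ ⨆ n, ENNReal.ofReal (⟪x, u n⟫ - ψ (u n) + ψ 0) := by
  obtain ⟨v, hv_mem, hv_tendsto⟩ := mem_closure_iff_seq_limit.mp (hu y)
  have hF : Continuous (fun t : E => ENNReal.ofReal (⟪x, t⟫ - ψ t + ψ 0)) :=
    ENNReal.continuous_ofReal.comp
      (((continuous_const.inner continuous_id).sub hψc).add continuous_const)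
  refine le_of_tendsto ((hF.tendsto y).comp hv_tendsto) ?_
  filter_upwards with n
  obtain ⟨m, hm⟩ := hv_mem n
  simp only [Function.comp_apply]
  rw [← hm]
  exact le_iSup (fun k => ENNReal.ofReal (⟪x, u k⟫ - ψ (u k) + ψ 0)) m

/-- At a gradient point, the countable-sup conjugate is attained. -/
lemma auxB [CompleteSpace E] {ψ : E → ℝ} (hconv : ConvexOn ℝ Set.univ ψ)
    (hψc : Continuous ψ) {u : ℕ → E} (hu : DenseRange u) {g y : E}
    (h : HasGradientAt ψ g y) :
    (⨆ n, ENNReal.ofReal (⟪g, u n⟫ - ψ (u n) + ψ 0))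
      = ENNReal.ofReal (⟪g, y⟫ - ψ y + ψ 0) := by
  refine le_antisymm (iSup_le fun n => ENNReal.ofReal_le_ofReal ?_) (auxA hψc hu g y)
  have h1 := grad_subgrad hconv h (u n)
  have h2 : ⟪g, u n - y⟫ = ⟪g, u n⟫ - ⟪g, y⟫ := inner_sub_right g (u n) y
  linarith

end Aux

/-- Closest-point assertion of Brenier's polar factorization (Theorem 1.1): for a
nondegenerate square-integrable map `X` on the unit cube, the composition `T ∘ X`
(where `T = ∇ψ` pushes `ρ = X#λ` back to `λ`) is the closest point to `X` among all
measure-preserving maps `s` of the unit cube. -/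
theorem stmt17 (d : ℕ)
    (cube : Set (EuclideanSpace ℝ (Fin d)))
    (hcube : cube = (WithLp.ofLp : EuclideanSpace ℝ (Fin d) → (Fin d → ℝ)) ⁻¹'
      (Set.univ.pi fun _ : Fin d => Set.Icc (0 : ℝ) 1))
    (lam : Measure (EuclideanSpace ℝ (Fin d))) (hlam : lam = volume.restrict cube)
    (X : EuclideanSpace ℝ (Fin d) → EuclideanSpace ℝ (Fin d))
    (hXmeas : Measurable X) (hX2 : MemLp X 2 lam)
    (ρ : Measure (EuclideanSpace ℝ (Fin d))) (hρ : ρ = Measure.map X lam)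
    (hac : ρ ≪ volume)
    (ψ : EuclideanSpace ℝ (Fin d) → ℝ) (K : NNReal)
    (hψlip : LipschitzWith K ψ) (hψconv : ConvexOn ℝ Set.univ ψ)
    (T : EuclideanSpace ℝ (Fin d) → EuclideanSpace ℝ (Fin d))
    (hTmeas : Measurable T)
    (hTgrad : ∀ᵐ y ∂ρ, HasGradientAt ψ (T y) y)
    (hTpush : Measure.map T ρ = lam)
    (s : EuclideanSpace ℝ (Fin d) → EuclideanSpace ℝ (Fin d))
    (hsmeas : Measurable s) (hsrange : ∀ a, s a ∈ cube)
    (hspush : Measure.map s lam = lam) :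
    ∫ a, ‖X a - T (X a)‖ ^ 2 ∂lam ≤ ∫ a, ‖X a - s a‖ ^ 2 ∂lam := by
  classical
  have hψc : Continuous ψ := hψlip.continuous
  -- basic measure facts
  have hcube_cpt : IsCompact cube := by
    rw [hcube]; exact (PiLp.homeomorph 2 (fun _ : Fin d => ℝ)).isCompact_preimage.mpr (isCompact_univ_pi fun _ => isCompact_Icc)
  have hcube_meas : MeasurableSet cube := hcube_cpt.measurableSet
  haveI hlamfin : IsFiniteMeasure lam := by
    constructor
    rw [hlam, Measure.restrict_apply_univ]
    exact hcube_cpt.measure_lt_top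
  -- bound on the cube
  set C : ℝ := Real.sqrt d with hC
  have hcube_bdd : ∀ x ∈ cube, ‖x‖ ≤ C := by
    intro x hx
    rw [hcube, Set.mem_preimage, Set.mem_pi] at hx
    rw [EuclideanSpace.norm_eq]
    apply Real.sqrt_le_sqrt
    calc (∑ i, ‖x i‖ ^ 2) ≤ ∑ _i : Fin d, (1:ℝ) := by
          apply Finset.sum_le_sum
          intro i _
          have h1 := hx i (Set.mem_univ i)
          have hab : |x i| ≤ 1 := abs_le.mpr ⟨by linarith [h1.1], h1.2⟩
          calc ‖x i‖ ^ 2 = |x i| ^ 2 := by rw [Real.norm_eq_abs]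
            _ ≤ 1 ^ 2 := by
                exact pow_le_pow_left₀ (abs_nonneg _) hab 2
            _ = 1 := one_pow 2
      _ = (d:ℝ) := by simp
  -- the composed pushforward
  have hTXmeas : Measurable fun a => T (X a) := hTmeas.comp hXmeas
  have hTXpush : Measure.map (fun a => T (X a)) lam = lam := by
    have := Measure.map_map hTmeas hXmeas (μ := lam)
    rw [← hρ] at this
    rw [show (fun a => T (X a)) = T ∘ X from rfl, ← this, hTpush]
  -- MemLp facts
  have hid2 : MemLp (id : EuclideanSpace ℝ (Fin d) → EuclideanSpace ℝ (Fin d)) 2 lam := by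
    refine MemLp.of_bound aestronglyMeasurable_id C ?_
    rw [hlam]
    filter_upwards [ae_restrict_mem hcube_meas] with x hx
    exact hcube_bdd x hx
  have hs2 : MemLp s 2 lam :=
    MemLp.of_bound hsmeas.aestronglyMeasurable C
      (Filter.Eventually.of_forall fun a => hcube_bdd _ (hsrange a))
  have hTX2 : MemLp (fun a => T (X a)) 2 lam := by
    have h1 : MemLp (id : EuclideanSpace ℝ (Fin d) → EuclideanSpace ℝ (Fin d)) 2 (Measure.map (fun a => T (X a)) lam) := by
      rw [hTXpush]; exact hid2
    exact (memLp_map_measure_iff aestronglyMeasurable_id hTXmeas.aemeasurable).mp h1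
  -- integrability of squared norms
  have sqInt : ∀ (v : EuclideanSpace ℝ (Fin d) → EuclideanSpace ℝ (Fin d)), MemLp v 2 lam → Integrable (fun a => ‖v a‖ ^ 2) lam := by
    intro v hv
    have := hv.integrable_norm_rpow two_ne_zero ENNReal.ofNat_ne_top
    simp only [ENNReal.toReal_ofNat] at this
    convert this using 2 with a
    rw [show ((2:ℝ)) = ((2:ℕ):ℝ) by norm_num, Real.rpow_natCast]
  have hXsqInt := sqInt X hX2
  have hTXsqInt := sqInt _ hTX2
  have hssqInt := sqInt s hs2
  -- integrability of inner products
  have innerInt : ∀ (v : EuclideanSpace ℝ (Fin d) → EuclideanSpace ℝ (Fin d)), MemLp v 2 lam → Measurable v →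
      Integrable (fun a => ⟪X a, v a⟫) lam := by
    intro v hv hvm
    have hmul : Integrable (fun a => ‖X a‖ * ‖v a‖) lam := by
      have h1 : MemLp (fun a => ‖X a‖) 2 lam := hX2.norm
      have h2 : MemLp (fun a => ‖v a‖) 2 lam := hv.norm
      have h3 : MemLp ((fun a => ‖X a‖) • (fun a => ‖v a‖)) 1 lam := by
        exact MemLp.smul h2 h1
      have h4 := h3.integrable le_rfl
      refine h4.congr ?_
      filter_upwards with a
      simp [Pi.smul_apply, smul_eq_mul]
    refine Integrable.mono' hmul ((hXmeas.inner hvm).aestronglyMeasurable) ?_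
    filter_upwards with a
    rw [Real.norm_eq_abs]
    exact abs_real_inner_le_norm (X a) (v a)
  have hinner_s := innerInt s hs2 hsmeas
  have hinner_TX := innerInt _ hTX2 hTXmeas
  -- integrability of ψ ∘ X
  have hXnormInt : Integrable (fun a => ‖X a‖) lam :=
    (hX2.integrable (by norm_num)).norm
  have hψXInt : Integrable (fun a => ψ (X a)) lam := by
    refine Integrable.mono' (hXnormInt.const_mul (K:ℝ) |>.add (integrable_const |ψ 0|))
      ((hψc.measurable.comp hXmeas).aestronglyMeasurable) ?_
    filter_upwards with a
    have h1 : |ψ (X a) - ψ 0| ≤ (K:ℝ) * ‖X a‖ := by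
      have := hψlip.dist_le_mul (X a) 0
      rw [Real.dist_eq, dist_zero_right] at this
      exact this
    rw [Real.norm_eq_abs]
    calc |ψ (X a)| = |ψ (X a) - ψ 0 + ψ 0| := by ring_nf
      _ ≤ |ψ (X a) - ψ 0| + |ψ 0| := abs_add_le _ _
      _ ≤ (K:ℝ) * ‖X a‖ + |ψ 0| := by linarith
  -- equality of second moments
  have hmom : ∫ a, ‖T (X a)‖ ^ 2 ∂lam = ∫ a, ‖s a‖ ^ 2 ∂lam := by
    have h1 : ∫ a, ‖T (X a)‖ ^ 2 ∂lam = ∫ x, ‖x‖ ^ 2 ∂lam := by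
      conv_rhs => rw [← hTXpush]
      exact (integral_map hTXmeas.aemeasurable
        ((continuous_norm.pow 2).aestronglyMeasurable)).symm
    have h2 : ∫ a, ‖s a‖ ^ 2 ∂lam = ∫ x, ‖x‖ ^ 2 ∂lam := by
      conv_rhs => rw [← hspush]
      exact (integral_map hsmeas.aemeasurable
        ((continuous_norm.pow 2).aestronglyMeasurable)).symm
    rw [h1, h2]
  -- the conjugate-function argument
  obtain ⟨u, hu⟩ : ∃ u : ℕ → EuclideanSpace ℝ (Fin d), DenseRange u :=
    ⟨_, TopologicalSpace.denseRange_denseSeq _⟩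
  set g : EuclideanSpace ℝ (Fin d) → ℝ≥0∞ := fun x => ⨆ n, ENNReal.ofReal (⟪x, u n⟫ - ψ (u n) + ψ 0) with hg
  have hgmeas : Measurable g := by
    apply Measurable.iSup
    intro n
    exact (ENNReal.continuous_ofReal.comp
      (((continuous_id.inner continuous_const).sub continuous_const).add
        continuous_const)).measurable
  set H : EuclideanSpace ℝ (Fin d) → ℝ := fun y => ⟪T y, y⟫ - ψ y + ψ 0 with hHdef
  have hHmeas : Measurable H :=
    ((hTmeas.inner measurable_id).sub hψc.measurable).add measurable_const
  have hHae : ∀ᵐ y ∂ρ, g (T y) = ENNReal.ofReal (H y) ∧ 0 ≤ H y := by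
    filter_upwards [hTgrad] with y hy
    constructor
    · exact auxB hψconv hψc hu hy
    · have h1 := grad_subgrad hψconv hy 0
      have h2 : ⟪T y, 0 - y⟫ = -⟪T y, y⟫ := by
        rw [zero_sub, inner_neg_right]
      rw [h2] at h1
      simp only [hHdef]
      linarith
  -- Integrable H ρ
  have hHIntρ : Integrable H ρ := by
    rw [hρ]
    rw [integrable_map_measure hHmeas.aestronglyMeasurable hXmeas.aemeasurable]
    have : (H ∘ X) = fun a => ⟪T (X a), X a⟫ - ψ (X a) + ψ 0 := rfl
    rw [this]
    have hinner' : Integrable (fun a => ⟪T (X a), X a⟫) lam := by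
      have he : (fun a => ⟪T (X a), X a⟫) = fun a => ⟪X a, T (X a)⟫ :=
        funext fun a => real_inner_comm _ _
      rw [he]; exact hinner_TX
    exact (hinner'.sub hψXInt).add (integrable_const _)
  have hHnn : 0 ≤ᵐ[ρ] H := by filter_upwards [hHae] with y hy using hy.2
  -- lintegral chain
  have chain : ∫⁻ a, g (s a) ∂lam = ∫⁻ y, ENNReal.ofReal (H y) ∂ρ := by
    have e1 : ∫⁻ a, g (s a) ∂lam = ∫⁻ x, g x ∂lam := by
      conv_rhs => rw [← hspush]
      rw [lintegral_map hgmeas hsmeas]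
    have e2 : ∫⁻ x, g x ∂lam = ∫⁻ y, g (T y) ∂ρ := by
      rw [← hTpush, lintegral_map hgmeas hTmeas]
    have e3 : ∫⁻ y, g (T y) ∂ρ = ∫⁻ y, ENNReal.ofReal (H y) ∂ρ := by
      apply lintegral_congr_ae
      filter_upwards [hHae] with y hy using hy.1
    rw [e1, e2, e3]
  -- the real function h₂
  set h₂ : EuclideanSpace ℝ (Fin d) → ℝ := fun a => ⟪s a, X a⟫ - ψ (X a) + ψ 0 with hh₂def
  have hh₂Int : Integrable h₂ lam := by
    have hinner' : Integrable (fun a => ⟪s a, X a⟫) lam := by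
      have he : (fun a => ⟪s a, X a⟫) = fun a => ⟪X a, s a⟫ :=
        funext fun a => real_inner_comm _ _
      rw [he]; exact hinner_s
    exact (hinner'.sub hψXInt).add (integrable_const _)
  have hh₂le : ∀ a, ENNReal.ofReal (h₂ a) ≤ g (s a) := fun a => auxA hψc hu (s a) (X a)
  -- core inequality via ofReal
  have hcore0 : ∫ a, h₂ a ∂lam ≤ ∫ y, H y ∂ρ := by
    have hposInt : Integrable (fun a => max (h₂ a) 0) lam := hh₂Int.pos_part
    have step1 : ∫ a, h₂ a ∂lam ≤ ∫ a, max (h₂ a) 0 ∂lam :=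
      integral_mono hh₂Int hposInt fun a => le_max_left _ _
    have step2 : ENNReal.ofReal (∫ a, max (h₂ a) 0 ∂lam) = ∫⁻ a, ENNReal.ofReal (h₂ a) ∂lam := by
      rw [ofReal_integral_eq_lintegral_ofReal hposInt
        (Filter.Eventually.of_forall fun a => le_max_right _ _)]
      apply lintegral_congr_ae
      filter_upwards with a
      rcases le_total (h₂ a) 0 with h | h
      · rw [max_eq_right h, ENNReal.ofReal_zero, ENNReal.ofReal_eq_zero.mpr h]
      · rw [max_eq_left h]
    have step3 : ∫⁻ a, ENNReal.ofReal (h₂ a) ∂lam ≤ ∫⁻ a, g (s a) ∂lam :=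
      lintegral_mono fun a => hh₂le a
    have step4 : ENNReal.ofReal (∫ y, H y ∂ρ) = ∫⁻ y, ENNReal.ofReal (H y) ∂ρ :=
      ofReal_integral_eq_lintegral_ofReal hHIntρ hHnn
    have : ENNReal.ofReal (∫ a, max (h₂ a) 0 ∂lam) ≤ ENNReal.ofReal (∫ y, H y ∂ρ) := by
      rw [step2, step4]
      exact step3.trans_eq chain
    have hHInt_nonneg : 0 ≤ ∫ y, H y ∂ρ := integral_nonneg_of_ae hHnn
    have := (ENNReal.ofReal_le_ofReal_iff hHInt_nonneg).mp this
    linarith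
  -- rewrite ∫ H dρ as integral over lam
  have hHtolam : ∫ y, H y ∂ρ = ∫ a, H (X a) ∂lam := by
    rw [hρ, integral_map hXmeas.aemeasurable hHmeas.aestronglyMeasurable]
  -- core inequality for inner products
  have hcore : ∫ a, ⟪X a, s a⟫ ∂lam ≤ ∫ a, ⟪X a, T (X a)⟫ ∂lam := by
    rw [hHtolam] at hcore0
    have hHX : (fun a => H (X a)) = fun a => ⟪T (X a), X a⟫ - ψ (X a) + ψ 0 := rfl
    rw [hHX] at hcore0
    have hinner_TX' : Integrable (fun a => ⟪T (X a), X a⟫) lam := by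
      have he : (fun a => ⟪T (X a), X a⟫) = fun a => ⟪X a, T (X a)⟫ :=
        funext fun a => real_inner_comm _ _
      rw [he]; exact hinner_TX
    have hinner_s' : Integrable (fun a => ⟪s a, X a⟫) lam := by
      have he : (fun a => ⟪s a, X a⟫) = fun a => ⟪X a, s a⟫ :=
        funext fun a => real_inner_comm _ _
      rw [he]; exact hinner_s
    have EA : ∫ a, h₂ a ∂lam
        = (∫ a, ⟪s a, X a⟫ ∂lam - ∫ a, ψ (X a) ∂lam) + ∫ _a, ψ 0 ∂lam := by
      have I1 : Integrable (fun a => ⟪s a, X a⟫ - ψ (X a)) lam := hinner_s'.sub hψXInt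
      have : ∫ a, h₂ a ∂lam = ∫ a, ((⟪s a, X a⟫ - ψ (X a)) + ψ 0) ∂lam := rfl
      rw [this, integral_add I1 (integrable_const _), integral_sub hinner_s' hψXInt]
    have EB : ∫ a, (⟪T (X a), X a⟫ - ψ (X a) + ψ 0) ∂lam
        = (∫ a, ⟪T (X a), X a⟫ ∂lam - ∫ a, ψ (X a) ∂lam) + ∫ _a, ψ 0 ∂lam := by
      have I1 : Integrable (fun a => ⟪T (X a), X a⟫ - ψ (X a)) lam := hinner_TX'.sub hψXInt
      rw [integral_add I1 (integrable_const _), integral_sub hinner_TX' hψXInt]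
    rw [EA, EB] at hcore0
    have e1 : ∫ a, ⟪X a, s a⟫ ∂lam = ∫ a, ⟪s a, X a⟫ ∂lam := by
      apply integral_congr_ae
      filter_upwards with a
      exact real_inner_comm _ _
    have e2 : ∫ a, ⟪X a, T (X a)⟫ ∂lam = ∫ a, ⟪T (X a), X a⟫ ∂lam := by
      apply integral_congr_ae
      filter_upwards with a
      exact real_inner_comm _ _
    rw [e1, e2]
    linarith
  -- final expansion
  have expand : ∀ (v : EuclideanSpace ℝ (Fin d) → EuclideanSpace ℝ (Fin d)), (fun a => ‖X a - v a‖ ^ 2)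
      = fun a => ‖X a‖ ^ 2 - 2 * ⟪X a, v a⟫ + ‖v a‖ ^ 2 := by
    intro v; funext a
    exact norm_sub_sq_real (X a) (v a)
  rw [show (fun a => ‖X a - T (X a)‖ ^ 2) = fun a => ‖X a - T (X a)‖ ^ 2 from rfl]
  calc ∫ a, ‖X a - T (X a)‖ ^ 2 ∂lam
      = ∫ a, (‖X a‖ ^ 2 - 2 * ⟪X a, T (X a)⟫ + ‖T (X a)‖ ^ 2) ∂lam := by
        apply integral_congr_ae
        filter_upwards with a
        exact norm_sub_sq_real (X a) (T (X a))
    _ = ∫ a, ‖X a‖ ^ 2 ∂lam - 2 * ∫ a, ⟪X a, T (X a)⟫ ∂lam + ∫ a, ‖T (X a)‖ ^ 2 ∂lam := by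
        have I1 : Integrable (fun a => ‖X a‖ ^ 2 - 2 * ⟪X a, T (X a)⟫) lam :=
          hXsqInt.sub (hinner_TX.const_mul 2)
        rw [integral_add I1 hTXsqInt,
            integral_sub hXsqInt (hinner_TX.const_mul 2), integral_const_mul]
    _ ≤ ∫ a, ‖X a‖ ^ 2 ∂lam - 2 * ∫ a, ⟪X a, s a⟫ ∂lam + ∫ a, ‖s a‖ ^ 2 ∂lam := by
        rw [hmom]
        linarith [hcore]
    _ = ∫ a, (‖X a‖ ^ 2 - 2 * ⟪X a, s a⟫ + ‖s a‖ ^ 2) ∂lam := by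
        have I1 : Integrable (fun a => ‖X a‖ ^ 2 - 2 * ⟪X a, s a⟫) lam :=
          hXsqInt.sub (hinner_s.const_mul 2)
        rw [integral_add I1 hssqInt,
            integral_sub hXsqInt (hinner_s.const_mul 2), integral_const_mul]
    _ = ∫ a, ‖X a - s a‖ ^ 2 ∂lam := by
        apply integral_congr_ae
        filter_upwards with a
        exact (norm_sub_sq_real (X a) (s a)).symm
end

section
/- Let E be a finite-dimensional real inner product space, S ⊆ E a nonempty finite set, and Φ(Y) = (1/2)·dist(Y,S)². Let θ₀ < θ₁ and let X : [θ₀,θ₁] → E be twice continuously differentiable. Assume Φ is differentiable at X(θ) for every θ ∈ [θ₀,θ₁], that θ ↦ ∇Φ(X(θ)) is continuous, and that X minimizes the action A(Y) = ∫_{θ₀}^{θ₁} ( (1/2)·‖Y'(θ)‖² + Φ(Y(θ)) ) dθ among all continuously differentiable curves Y : [θ₀,θ₁] → E with Y(θ₀) = X(θ₀) and Y(θ₁) = X(θ₁). Then X''(θ) = ∇Φ(X(θ)) = X(θ) − s*(θ) for every θ ∈ (θ₀,θ₁), where s*(θ) denotes the unique nearest point of X(θ) in S. -/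
open intervalIntegral

section helpers

open Set MeasureTheory

local notation "⟪" x ", " y "⟫" => @inner ℝ _ _ x y

variable {E : Type*} [NormedAddCommGroup E] [InnerProductSpace ℝ E] [FiniteDimensional ℝ E]

private lemma sq_half_hasGradientAt (s Y : E) :
    HasGradientAt (fun Z => ‖Z - s‖ ^ 2 / 2) (Y - s) Y := by
  rw [hasGradientAt_iff_hasFDerivAt]
  have h1 : HasFDerivAt (fun Z : E => Z - s) (ContinuousLinearMap.id ℝ E) Y :=
    (hasFDerivAt_id Y).sub_const s
  have h2 := (h1.inner ℝ h1).mul_const (2⁻¹ : ℝ)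
  have heq : (fun Z : E => ‖Z - s‖ ^ 2 / 2) = fun Z => ⟪Z - s, Z - s⟫ * 2⁻¹ := by
    funext Z; rw [real_inner_self_eq_norm_sq]; ring
  rw [heq]
  convert h2 using 1
  · rfl
  ext w
  simp [fderivInnerCLM, inner_sub_left, inner_sub_right, real_inner_comm Y w,
    real_inner_comm s w]
  ring

private lemma Phi_le (S : Finset E) (Φ : E → ℝ)
    (hΦ : ∀ Y, Φ Y = Metric.infDist Y (S : Set E) ^ 2 / 2)
    {s : E} (hs : s ∈ S) (Z : E) : Φ Z ≤ ‖Z - s‖ ^ 2 / 2 := by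
  rw [hΦ]
  have h1 : Metric.infDist Z (S : Set E) ≤ dist Z s :=
    Metric.infDist_le_dist_of_mem (by exact_mod_cast hs)
  have h0 : 0 ≤ Metric.infDist Z (S : Set E) := Metric.infDist_nonneg
  rw [dist_eq_norm] at h1
  nlinarith [norm_nonneg (Z - s)]

private lemma grad_of_near (S : Finset E) (Φ : E → ℝ)
    (hΦ : ∀ Y, Φ Y = Metric.infDist Y (S : Set E) ^ 2 / 2)
    {Y : E} (hd : DifferentiableAt ℝ Φ Y) {s : E} (hs : s ∈ S)
    (hnear : ‖Y - s‖ = Metric.infDist Y (S : Set E)) :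
    gradient Φ Y = Y - s := by
  have key : ∀ Z, Φ Z ≤ ‖Z - s‖ ^ 2 / 2 := Phi_le S Φ hΦ hs
  have heq : Φ Y = ‖Y - s‖ ^ 2 / 2 := by rw [hΦ, ← hnear]
  have hq := sq_half_hasGradientAt s Y
  have hmin : IsLocalMin (fun Z => ‖Z - s‖ ^ 2 / 2 - Φ Z) Y :=
    Filter.Eventually.of_forall fun Z => by
      simp only [heq, sub_self]; linarith [key Z]
  have h0 : fderiv ℝ (fun Z => ‖Z - s‖ ^ 2 / 2 - Φ Z) Y = 0 := hmin.fderiv_eq_zero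
  have hqd : DifferentiableAt ℝ (fun Z : E => ‖Z - s‖ ^ 2 / 2) Y := hq.differentiableAt
  rw [fderiv_fun_sub hqd hd] at h0
  have hΦf : fderiv ℝ Φ Y = fderiv ℝ (fun Z : E => ‖Z - s‖ ^ 2 / 2) Y := by
    rw [sub_eq_zero] at h0; exact h0.symm
  have hgr : gradient Φ Y = gradient (fun Z : E => ‖Z - s‖ ^ 2 / 2) Y := by
    unfold gradient; rw [hΦf]
  rw [hgr, hq.gradient]

private lemma exists_near (S : Finset E) (hS : S.Nonempty) (Y : E) :
    ∃ s ∈ S, ‖Y - s‖ = Metric.infDist Y (S : Set E) := by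
  obtain ⟨s, hs, h⟩ := (S.finite_toSet.isCompact).exists_infDist_eq_dist
    (by exact_mod_cast hS) Y
  exact ⟨s, hs, by rw [← dist_eq_norm, h]⟩

end helpers

section main

open MeasureTheory

local notation "⟪" x ", " y "⟫" => @inner ℝ _ _ x y

/-- Optimality equation for the least action principle obtained from the second
application of the large deviation principle: a `C²` minimizer of the action
`∫ (½‖X'‖² + Φ(X))` with `Φ = ½ dist(·,S)²`, along which `Φ` is differentiable with
continuous gradient, satisfies `X'' = ∇Φ(X) = X − π(X)` in the interior, where
`π(X(θ))` is the unique nearest point of `X(θ)` in `S`. -/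
theorem stmt18 {E : Type*} [NormedAddCommGroup E] [InnerProductSpace ℝ E]
    [FiniteDimensional ℝ E]
    (S : Finset E) (hS : S.Nonempty)
    (Φ : E → ℝ) (hΦ : ∀ Y : E, Φ Y = Metric.infDist Y (S : Set E) ^ 2 / 2)
    (θ₀ θ₁ : ℝ) (hθ : θ₀ < θ₁)
    (X X' X'' : ℝ → E)
    (hX : ∀ θ ∈ Set.Icc θ₀ θ₁, HasDerivAt X (X' θ) θ)
    (hX' : ∀ θ ∈ Set.Icc θ₀ θ₁, HasDerivAt X' (X'' θ) θ)
    (hX'' : ContinuousOn X'' (Set.Icc θ₀ θ₁))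
    (hdiff : ∀ θ ∈ Set.Icc θ₀ θ₁, DifferentiableAt ℝ Φ (X θ))
    (hgrad : ContinuousOn (fun θ => gradient Φ (X θ)) (Set.Icc θ₀ θ₁))
    (hmin : ∀ (Y Y' : ℝ → E),
      (∀ θ ∈ Set.Icc θ₀ θ₁, HasDerivAt Y (Y' θ) θ) →
      ContinuousOn Y' (Set.Icc θ₀ θ₁) →
      Y θ₀ = X θ₀ → Y θ₁ = X θ₁ →
      (∫ θ in θ₀..θ₁, (‖X' θ‖ ^ 2 / 2 + Φ (X θ)))
        ≤ ∫ θ in θ₀..θ₁, (‖Y' θ‖ ^ 2 / 2 + Φ (Y θ))) :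
    ∀ θ ∈ Set.Ioo θ₀ θ₁,
      X'' θ = gradient Φ (X θ)
      ∧ ∃ sstar ∈ S,
          ‖X θ - sstar‖ = Metric.infDist (X θ) (S : Set E)
          ∧ (∀ s ∈ S, ‖X θ - s‖ = Metric.infDist (X θ) (S : Set E) → s = sstar)
          ∧ X'' θ = X θ - sstar := by
  have hab : θ₀ ≤ θ₁ := hθ.le
  set g : ℝ → E := fun t => gradient Φ (X t) with hgdef
  -- Φ is continuous
  have CΦ : Continuous Φ := by
    have hΦ' : Φ = fun Y => Metric.infDist Y (S : Set E) ^ 2 / 2 := funext hΦ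
    rw [hΦ']
    exact ((Metric.continuous_infDist_pt (S : Set E)).pow 2).div_const 2
  -- pointwise facts
  have hfacts : ∀ t ∈ Set.Icc θ₀ θ₁,
      (X t - g t ∈ S) ∧ ‖g t‖ = Metric.infDist (X t) (S : Set E)
      ∧ Φ (X t) = ‖g t‖ ^ 2 / 2
      ∧ ∀ Z, Φ Z ≤ ‖Z - (X t - g t)‖ ^ 2 / 2 := by
    intro t ht
    obtain ⟨s, hs, hnear⟩ := exists_near S hS (X t)
    have hgt : g t = X t - s := grad_of_near S Φ hΦ (hdiff t ht) hs hnear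
    have hXgs : X t - g t = s := by rw [hgt]; abel
    refine ⟨hXgs ▸ hs, ?_, ?_, fun Z => by rw [hXgs]; exact Phi_le S Φ hΦ hs Z⟩
    · rw [hgt]; exact hnear
    · rw [hΦ, ← hnear, hgt]
  -- continuity
  have CX : ContinuousOn X (Set.Icc θ₀ θ₁) :=
    fun t ht => (hX t ht).continuousAt.continuousWithinAt
  have CX' : ContinuousOn X' (Set.Icc θ₀ θ₁) :=
    fun t ht => (hX' t ht).continuousAt.continuousWithinAt
  have Cg : ContinuousOn g (Set.Icc θ₀ θ₁) := hgrad
  -- clamp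
  set cl : ℝ → ℝ := fun t => max θ₀ (min t θ₁) with hcldef
  have clcont : Continuous cl := continuous_const.max (continuous_id.min continuous_const)
  have clmem : ∀ t, cl t ∈ Set.Icc θ₀ θ₁ :=
    fun t => ⟨le_max_left _ _, max_le hab (min_le_right _ _)⟩
  have cleq : ∀ t ∈ Set.Icc θ₀ θ₁, cl t = t := by
    intro t ht
    show max θ₀ (min t θ₁) = t
    rw [min_eq_left ht.2, max_eq_right ht.1]
  set ge : ℝ → E := fun t => g (cl t) with hgedef
  set Xe' : ℝ → E := fun t => X' (cl t) with hXedef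
  have Cge : Continuous ge := Cg.comp_continuous clcont clmem
  have CXe' : Continuous Xe' := CX'.comp_continuous clcont clmem
  have geeq : ∀ t ∈ Set.Icc θ₀ θ₁, ge t = g t := fun t ht => by
    show g (cl t) = g t; rw [cleq t ht]
  have Xe'eq : ∀ t ∈ Set.Icc θ₀ θ₁, Xe' t = X' t := fun t ht => by
    show X' (cl t) = X' t; rw [cleq t ht]
  -- primitive of ge
  set G : ℝ → E := fun u => ∫ t in θ₀..u, ge t with hGdef
  have hG : ∀ u, HasDerivAt G (ge u) u :=
    fun u => (Cge.integral_hasStrictDerivAt θ₀ u).hasDerivAt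
  have CG : Continuous G := continuous_iff_continuousAt.mpr fun u => (hG u).continuousAt
  set F : ℝ → E := fun t => Xe' t - G t with hFdef
  have CF : Continuous F := CXe'.sub CG
  set c : E := (θ₁ - θ₀)⁻¹ • (∫ t in θ₀..θ₁, F t) with hcdef
  have hIF : (∫ t in θ₀..θ₁, F t) = (θ₁ - θ₀) • c := by
    rw [hcdef, smul_smul, mul_inv_cancel₀ (sub_ne_zero.mpr hθ.ne'), one_smul]
  set η : ℝ → E := fun u => (∫ t in θ₀..u, F t) - (u - θ₀) • c with hηdef
  set η' : ℝ → E := fun u => F u - c with hη'def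
  have hη : ∀ u, HasDerivAt η (η' u) u := by
    intro u
    have h1 := (CF.integral_hasStrictDerivAt θ₀ u).hasDerivAt
    have h2 : HasDerivAt (fun v : ℝ => (v - θ₀) • c) c u := by
      simpa using ((hasDerivAt_id u).sub_const θ₀).smul_const c
    exact h1.sub h2
  have Cη' : Continuous η' := CF.sub continuous_const
  have Cη : Continuous η := continuous_iff_continuousAt.mpr fun u => (hη u).continuousAt
  have hη0 : η θ₀ = 0 := by
    show (∫ t in θ₀..θ₀, F t) - (θ₀ - θ₀) • c = 0
    rw [intervalIntegral.integral_same]; simp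
  have hη1 : η θ₁ = 0 := by
    show (∫ t in θ₀..θ₁, F t) - (θ₁ - θ₀) • c = 0
    rw [hIF, sub_self]
  -- Euler–Lagrange identity
  have EL : ∀ (ζ ζ' : ℝ → E), (∀ u, HasDerivAt ζ (ζ' u) u) → Continuous ζ' →
      ζ θ₀ = 0 → ζ θ₁ = 0 →
      (∫ t in θ₀..θ₁, (⟪X' t, ζ' t⟫ + ⟪g t, ζ t⟫)) = 0 := by
    intro ζ ζ' hζ hζ' hz0 hz1
    have Cζ : Continuous ζ := continuous_iff_continuousAt.mpr fun u => (hζ u).continuousAt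
    set L : ℝ := ∫ t in θ₀..θ₁, (⟪X' t, ζ' t⟫ + ⟪g t, ζ t⟫) with hLdef
    set Q : ℝ := ∫ t in θ₀..θ₁, (‖ζ' t‖ ^ 2 / 2 + ‖ζ t‖ ^ 2 / 2) with hQdef
    have hQ0 : 0 ≤ Q :=
      intervalIntegral.integral_nonneg hab (fun u _ => by positivity)
    -- integrabilities
    have Ibase : IntervalIntegrable (fun u => ‖X' u‖ ^ 2 / 2 + Φ (X u)) volume θ₀ θ₁ := by
      apply ContinuousOn.intervalIntegrable
      rw [Set.uIcc_of_le hab]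
      exact ((CX'.norm.pow 2).div_const 2).add (CΦ.comp_continuousOn CX)
    have If1 : IntervalIntegrable (fun u => ⟪X' u, ζ' u⟫ + ⟪g u, ζ u⟫) volume θ₀ θ₁ := by
      apply ContinuousOn.intervalIntegrable
      rw [Set.uIcc_of_le hab]
      exact (CX'.inner hζ'.continuousOn).add (Cg.inner Cζ.continuousOn)
    have If2 : IntervalIntegrable (fun u => ‖ζ' u‖ ^ 2 / 2 + ‖ζ u‖ ^ 2 / 2) volume θ₀ θ₁ :=
      (((hζ'.norm.pow 2).div_const 2).add ((Cζ.norm.pow 2).div_const 2)).intervalIntegrable θ₀ θ₁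
    have key : ∀ ε : ℝ, 0 ≤ ε * L + ε ^ 2 * Q := by
      intro ε
      have hYd : ∀ u ∈ Set.Icc θ₀ θ₁,
          HasDerivAt (fun v => X v + ε • ζ v) (X' u + ε • ζ' u) u :=
        fun u hu => (hX u hu).add ((hζ u).const_smul ε)
      have hY' : ContinuousOn (fun u => X' u + ε • ζ' u) (Set.Icc θ₀ θ₁) :=
        CX'.add (hζ'.const_smul ε).continuousOn
      have h1' : (∫ t in θ₀..θ₁, (‖X' t‖ ^ 2 / 2 + Φ (X t)))
          ≤ ∫ t in θ₀..θ₁, (‖X' t + ε • ζ' t‖ ^ 2 / 2 + Φ (X t + ε • ζ t)) :=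
        hmin _ _ hYd hY' (by rw [hz0, smul_zero, add_zero]) (by rw [hz1, smul_zero, add_zero])
      have intL : IntervalIntegrable
          (fun u => ‖X' u + ε • ζ' u‖ ^ 2 / 2 + Φ (X u + ε • ζ u)) volume θ₀ θ₁ := by
        apply ContinuousOn.intervalIntegrable
        rw [Set.uIcc_of_le hab]
        exact (((CX'.add (hζ'.const_smul ε).continuousOn).norm.pow 2).div_const 2).add
          (CΦ.comp_continuousOn (CX.add (Cζ.const_smul ε).continuousOn))
      have intR : IntervalIntegrable
          (fun u => (‖X' u‖ ^ 2 / 2 + Φ (X u)) + (ε * (⟪X' u, ζ' u⟫ + ⟪g u, ζ u⟫)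
            + ε ^ 2 * (‖ζ' u‖ ^ 2 / 2 + ‖ζ u‖ ^ 2 / 2))) volume θ₀ θ₁ :=
        Ibase.add ((If1.const_mul ε).add (If2.const_mul (ε ^ 2)))
      have h2 : (∫ t in θ₀..θ₁, (‖X' t + ε • ζ' t‖ ^ 2 / 2 + Φ (X t + ε • ζ t)))
          ≤ ∫ t in θ₀..θ₁, ((‖X' t‖ ^ 2 / 2 + Φ (X t)) + (ε * (⟪X' t, ζ' t⟫ + ⟪g t, ζ t⟫)
            + ε ^ 2 * (‖ζ' t‖ ^ 2 / 2 + ‖ζ t‖ ^ 2 / 2))) := by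
        apply intervalIntegral.integral_mono_on hab intL intR
        intro u hu
        obtain ⟨-, -, hPhiX, hle⟩ := hfacts u hu
        have hZ := hle (X u + ε • ζ u)
        have e1 : X u + ε • ζ u - (X u - g u) = g u + ε • ζ u := by abel
        rw [e1] at hZ
        have e2 : ‖X' u + ε • ζ' u‖ ^ 2
            = ‖X' u‖ ^ 2 + 2 * (ε * ⟪X' u, ζ' u⟫) + ε ^ 2 * ‖ζ' u‖ ^ 2 := by
          rw [norm_add_sq_real, real_inner_smul_right, norm_smul]
          simp [mul_pow, sq_abs]
        have e3 : ‖g u + ε • ζ u‖ ^ 2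
            = ‖g u‖ ^ 2 + 2 * (ε * ⟪g u, ζ u⟫) + ε ^ 2 * ‖ζ u‖ ^ 2 := by
          rw [norm_add_sq_real, real_inner_smul_right, norm_smul]
          simp [mul_pow, sq_abs]
        have e4 : (‖X' u‖ ^ 2 / 2 + Φ (X u)) + (ε * (⟪X' u, ζ' u⟫ + ⟪g u, ζ u⟫)
            + ε ^ 2 * (‖ζ' u‖ ^ 2 / 2 + ‖ζ u‖ ^ 2 / 2))
            = ‖X' u + ε • ζ' u‖ ^ 2 / 2 + ‖g u + ε • ζ u‖ ^ 2 / 2 := by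
          rw [hPhiX, e2, e3]; ring
        rw [e4]
        linarith [hZ]
      have h3 : (∫ t in θ₀..θ₁, ((‖X' t‖ ^ 2 / 2 + Φ (X t)) + (ε * (⟪X' t, ζ' t⟫ + ⟪g t, ζ t⟫)
            + ε ^ 2 * (‖ζ' t‖ ^ 2 / 2 + ‖ζ t‖ ^ 2 / 2))))
          = (∫ t in θ₀..θ₁, (‖X' t‖ ^ 2 / 2 + Φ (X t))) + (ε * L + ε ^ 2 * Q) := by
        rw [intervalIntegral.integral_add Ibase ((If1.const_mul ε).add (If2.const_mul (ε ^ 2))),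
          intervalIntegral.integral_add (If1.const_mul ε) (If2.const_mul (ε ^ 2)),
          intervalIntegral.integral_const_mul, intervalIntegral.integral_const_mul]
      have := h1'.trans h2
      rw [h3] at this
      linarith
    -- conclude L = 0
    have hL2 : L ^ 2 ≤ 0 := by
      have k := key (-(L / (Q + 1)))
      have hQ1 : (0 : ℝ) < Q + 1 := by linarith
      have e : -(L / (Q + 1)) * L + (-(L / (Q + 1))) ^ 2 * Q
          = -(L ^ 2 / (Q + 1) ^ 2) := by
        field_simp; ring
      rw [e] at k
      have h2 : L ^ 2 / (Q + 1) ^ 2 ≤ 0 := by linarith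
      have h3 : (0 : ℝ) < (Q + 1) ^ 2 := by positivity
      have h4 := (div_le_iff₀ h3).mp h2
      linarith
    exact pow_eq_zero_iff two_ne_zero |>.mp (le_antisymm hL2 (sq_nonneg L))
  -- apply EL to the du Bois–Reymond variation
  have E1 : (∫ t in θ₀..θ₁, (⟪X' t, η' t⟫ + ⟪g t, η t⟫)) = 0 := EL η η' hη Cη' hη0 hη1
  have E2 : (∫ t in θ₀..θ₁, (⟪G t, η' t⟫ + ⟪ge t, η t⟫)) = 0 := by
    have hd : ∀ t ∈ Set.uIcc θ₀ θ₁,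
        HasDerivAt (fun u => ⟪G u, η u⟫) (⟪G t, η' t⟫ + ⟪ge t, η t⟫) t :=
      fun t _ => HasDerivAt.inner ℝ (hG t) (hη t)
    have hint : IntervalIntegrable (fun t => ⟪G t, η' t⟫ + ⟪ge t, η t⟫) volume θ₀ θ₁ :=
      ((CG.inner Cη').add (Cge.inner Cη)).intervalIntegrable θ₀ θ₁
    have := intervalIntegral.integral_eq_sub_of_hasDerivAt hd hint
    rw [hη0, hη1, inner_zero_right, inner_zero_right, sub_zero] at this
    exact this
  have E2' : (∫ t in θ₀..θ₁, (⟪G t, η' t⟫ + ⟪g t, η t⟫)) = 0 := by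
    rw [← E2]
    apply intervalIntegral.integral_congr
    intro t ht
    rw [Set.uIcc_of_le hab] at ht
    show ⟪G t, η' t⟫ + ⟪g t, η t⟫ = ⟪G t, η' t⟫ + ⟪ge t, η t⟫
    rw [geeq t ht]
  have Ia : IntervalIntegrable (fun t => ⟪X' t, η' t⟫ + ⟪g t, η t⟫) volume θ₀ θ₁ := by
    apply ContinuousOn.intervalIntegrable
    rw [Set.uIcc_of_le hab]
    exact (CX'.inner Cη'.continuousOn).add (Cg.inner Cη.continuousOn)
  have Ib : IntervalIntegrable (fun t => ⟪G t, η' t⟫ + ⟪g t, η t⟫) volume θ₀ θ₁ := by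
    apply ContinuousOn.intervalIntegrable
    rw [Set.uIcc_of_le hab]
    exact ((CG.inner Cη').continuousOn).add (Cg.inner Cη.continuousOn)
  have E3 : (∫ t in θ₀..θ₁, ⟪X' t - G t, η' t⟫) = 0 := by
    have hsub := intervalIntegral.integral_sub Ia Ib
    rw [E1, E2', sub_zero] at hsub
    rw [← hsub]
    apply intervalIntegral.integral_congr
    intro t _
    simp [inner_sub_left]
  have E4 : (∫ t in θ₀..θ₁, ⟪F t, η' t⟫) = 0 := by
    rw [← E3]
    apply intervalIntegral.integral_congr
    intro t ht
    rw [Set.uIcc_of_le hab] at ht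
    have heq : F t = X' t - G t := by
      show Xe' t - G t = X' t - G t
      rw [Xe'eq t ht]
    show ⟪F t, η' t⟫ = ⟪X' t - G t, η' t⟫
    rw [heq]
  have E5 : (∫ t in θ₀..θ₁, ⟪c, η' t⟫) = 0 := by
    have h1 : (∫ t in θ₀..θ₁, ⟪c, F t⟫) = (θ₁ - θ₀) * ⟪c, c⟫ := by
      have hcomm := ContinuousLinearMap.intervalIntegral_comp_comm
        (innerSL ℝ c) (CF.intervalIntegrable (μ := MeasureTheory.volume) θ₀ θ₁)
      simp only [innerSL_apply_apply] at hcomm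
      rw [hcomm, hIF, real_inner_smul_right]
    have h2 : (∫ t in θ₀..θ₁, ⟪c, η' t⟫)
        = (∫ t in θ₀..θ₁, ⟪c, F t⟫) - ∫ t in θ₀..θ₁, ⟪c, c⟫ := by
      have Icf : IntervalIntegrable (fun t => ⟪c, F t⟫) volume θ₀ θ₁ :=
        ((continuous_const : Continuous fun _ : ℝ => c).inner (𝕜 := ℝ) CF).intervalIntegrable θ₀ θ₁
      have Icc' : IntervalIntegrable (fun _ : ℝ => ⟪c, c⟫) volume θ₀ θ₁ :=
        continuous_const.intervalIntegrable θ₀ θ₁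
      rw [← intervalIntegral.integral_sub Icf Icc']
      apply intervalIntegral.integral_congr
      intro t _
      show ⟪c, F t - c⟫ = ⟪c, F t⟫ - ⟪c, c⟫
      rw [inner_sub_right]
    rw [h2, h1, intervalIntegral.integral_const, smul_eq_mul]
    ring
  have E6 : (∫ t in θ₀..θ₁, ‖η' t‖ ^ 2) = 0 := by
    have Ifη : IntervalIntegrable (fun t => ⟪F t, η' t⟫) volume θ₀ θ₁ :=
      (CF.inner (𝕜 := ℝ) Cη').intervalIntegrable θ₀ θ₁
    have Icη : IntervalIntegrable (fun t => ⟪c, η' t⟫) volume θ₀ θ₁ :=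
      ((continuous_const : Continuous fun _ : ℝ => c).inner (𝕜 := ℝ) Cη').intervalIntegrable θ₀ θ₁
    have hsub := intervalIntegral.integral_sub Ifη Icη
    rw [E4, E5, sub_zero] at hsub
    rw [← hsub]
    apply intervalIntegral.integral_congr
    intro t _
    show ‖F t - c‖ ^ 2 = ⟪F t, F t - c⟫ - ⟪c, F t - c⟫
    rw [← real_inner_self_eq_norm_sq, inner_sub_left]
  -- η' vanishes on Ioo
  have hFc : Set.EqOn F (fun _ => c) (Set.Ioo θ₀ θ₁) := by
    have h0 : (∫ t in Set.Ioc θ₀ θ₁, ‖F t - c‖ ^ 2) = 0 := by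
      rw [← intervalIntegral.integral_of_le hab]
      exact E6
    have hi : IntegrableOn (fun t => ‖F t - c‖ ^ 2) (Set.Ioc θ₀ θ₁) volume :=
      (((CF.sub continuous_const).norm.pow 2)).integrableOn_Ioc
    have hz : (fun t => ‖F t - c‖ ^ 2) =ᵐ[volume.restrict (Set.Ioc θ₀ θ₁)] 0 :=
      (MeasureTheory.integral_eq_zero_iff_of_nonneg (fun t => by positivity) hi).mp h0
    have hz2 : (fun t => ‖F t - c‖ ^ 2) =ᵐ[volume.restrict (Set.Ioo θ₀ θ₁)] 0 :=
      MeasureTheory.ae_restrict_of_ae_restrict_of_subset Set.Ioo_subset_Ioc_self hz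
    have hz3 : F =ᵐ[volume.restrict (Set.Ioo θ₀ θ₁)] fun _ => c := by
      filter_upwards [hz2] with t ht
      have : ‖F t - c‖ ^ 2 = 0 := ht
      have hn : ‖F t - c‖ = 0 := by
        have := sq_eq_zero_iff.mp this
        exact this
      rw [norm_eq_zero, sub_eq_zero] at hn
      exact hn
    exact MeasureTheory.Measure.eqOn_Ioo_of_ae_eq volume hz3 CF.continuousOn continuousOn_const
  -- finish
  intro θ hθmem
  have hθI : θ ∈ Set.Icc θ₀ θ₁ := Set.Ioo_subset_Icc_self hθmem
  have hnb : Set.Ioo θ₀ θ₁ ∈ nhds θ := isOpen_Ioo.mem_nhds hθmem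
  have hXeq : X' =ᶠ[nhds θ] fun u => G u + c := by
    filter_upwards [hnb] with u hu
    have hFu : F u = c := hFc hu
    have hX'u : X' u = Xe' u := (Xe'eq u (Set.Ioo_subset_Icc_self hu)).symm
    have : Xe' u - G u = c := hFu
    rw [hX'u, ← this]
    abel
  have hd2 : HasDerivAt X' (ge θ) θ :=
    (((hG θ).add_const c)).congr_of_eventuallyEq hXeq
  have hXθ : X'' θ = g θ := by
    have := (hX' θ hθI).unique hd2
    rw [this, geeq θ hθI]
  refine ⟨hXθ, X θ - g θ, (hfacts θ hθI).1, ?_, ?_, ?_⟩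
  · rw [sub_sub_cancel]; exact (hfacts θ hθI).2.1
  · intro s hs hnear
    have hgs : g θ = X θ - s := grad_of_near S Φ hΦ (hdiff θ hθI) hs hnear
    rw [hgs]
    exact (sub_sub_cancel _ _).symm
  · rw [sub_sub_cancel]; exact hXθ

end main
end
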